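/- arXiv:2506.19244 — 4 statements merged into one kernel-verified Lean document; each statement's English description precedes it below -/
import Mathlib

section
/- There exist four affinely independent points A, B, C, D in ℝ³ and a point p in the interior of their convex hull such that the tetrahedron is stable on exactly one of its four faces with load point p; that is, monostable tetrahedra exist. -/
open RealInnerProductSpace

noncomputable section

abbrev E3 : Type := EuclideanSpace ℝ (Fin 3)

/-- The tetrahedron with load point `p` is *stable* on the face with vertices
`v₁, v₂, v₃`: the orthogonal projection of `p` onto the affine span of the face
lies in the relative (intrinsic) interior of the face. -/
def StableOn (p v₁ v₂ v₃ : E3) : Prop :=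
  ∃ q ∈ intrinsicInterior ℝ (convexHull ℝ ({v₁, v₂, v₃} : Set E3)),
    ∀ w ∈ (affineSpan ℝ ({v₁, v₂, v₃} : Set E3)).direction, ⟪p - q, w⟫ = 0

/-- Placed on the face with vertices `apex, e₁, e₂` and load point `p`, the
tetrahedron *tips over* the edge `e₁e₂` onto the adjacent face: the orthogonal
projection `q` of `p` onto the plane of the face lies strictly on the opposite
side of the line through `e₁, e₂` from the remaining vertex `apex`. -/
def TipsOver (p apex e₁ e₂ : E3) : Prop :=
  ∃ q ∈ affineSpan ℝ ({apex, e₁, e₂} : Set E3),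
    (∀ w ∈ (affineSpan ℝ ({apex, e₁, e₂} : Set E3)).direction, ⟪p - q, w⟫ = 0) ∧
    (affineSpan ℝ ({e₁, e₂} : Set E3)).SOppSide q apex

/-- The edge `PQ` of the tetrahedron `PQRS` is *obtuse*: writing `R'`, `S'` for
the components of `R - P`, `S - P` orthogonal to `Q - P`, we have `⟪R', S'⟫ < 0`. -/
def ObtuseEdge (P Q R S : E3) : Prop :=
  ⟪(R - P) - (⟪R - P, Q - P⟫ / ⟪Q - P, Q - P⟫) • (Q - P),
   (S - P) - (⟪S - P, Q - P⟫ / ⟪Q - P, Q - P⟫) • (Q - P)⟫ < 0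

/-- Stability on the `i`-th face of tetrahedron `ABCD` (the face opposite the
`i`-th vertex). -/
def FaceStable (A B C D p : E3) : Fin 4 → Prop
  | 0 => StableOn p B C D
  | 1 => StableOn p A C D
  | 2 => StableOn p A B D
  | 3 => StableOn p A B C

/-! ### Auxiliary material for the construction -/

namespace MonostableAux

abbrev E2 : Type := EuclideanSpace ℝ (Fin 2)

lemma inner3 (x y : E3) : ⟪x, y⟫ = x 0 * y 0 + x 1 * y 1 + x 2 * y 2 := by
  simp [PiLp.inner_apply, Fin.sum_univ_three, RCLike.inner_apply]; ring

lemma orth_span (v v0 v1 v2 : E3) (h1 : ⟪v, v1 - v0⟫ = 0) (h2 : ⟪v, v2 - v0⟫ = 0) :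
    ∀ w ∈ (affineSpan ℝ ({v0, v1, v2} : Set E3)).direction, ⟪v, w⟫ = 0 := by
  intro w hw
  rw [direction_affineSpan, vectorSpan_def] at hw
  have key : ∀ x ∈ ({v0, v1, v2} : Set E3), ⟪v, x - v0⟫ = 0 := by
    rintro x (rfl | rfl | rfl)
    · simp
    · exact h1
    · exact h2
  induction hw using Submodule.span_induction with
  | mem w hw =>
      obtain ⟨x, hx, y, hy, rfl⟩ := hw
      show ⟪v, x -ᵥ y⟫ = 0
      rw [vsub_eq_sub, show x - y = (x - v0) - (y - v0) by abel, inner_sub_right,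
        key x hx, key y hy, sub_zero]
  | zero => simp
  | add a b _ _ ha hb => rw [inner_add_right, ha, hb, add_zero]
  | smul c a _ ha => rw [real_inner_smul_right, ha, mul_zero]

lemma mem_span_triple (v0 v1 v2 : E3) (s t : ℝ) :
    s • (v1 - v0) + t • (v2 - v0) + v0 ∈ affineSpan ℝ ({v0, v1, v2} : Set E3) := by
  have h0 : v0 ∈ affineSpan ℝ ({v0, v1, v2} : Set E3) :=
    subset_affineSpan ℝ _ (by simp)
  have h1 : v1 ∈ affineSpan ℝ ({v0, v1, v2} : Set E3) :=
    subset_affineSpan ℝ _ (by simp)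
  have h2 : v2 ∈ affineSpan ℝ ({v0, v1, v2} : Set E3) :=
    subset_affineSpan ℝ _ (by simp)
  have := (affineSpan ℝ ({v0, v1, v2} : Set E3)).smul_vsub_vadd_mem t h2 h0
    ((affineSpan ℝ ({v0, v1, v2} : Set E3)).smul_vsub_vadd_mem s h1 h0 h0)
  simpa [vsub_eq_sub, vadd_eq_add, add_comm, add_left_comm, add_assoc] using this

lemma proj_unique (p q q' : E3) (S : Set E3) (hq : q ∈ affineSpan ℝ S)
    (hq' : q' ∈ affineSpan ℝ S)
    (h1 : ∀ w ∈ (affineSpan ℝ S).direction, ⟪p - q, w⟫ = 0)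
    (h2 : ∀ w ∈ (affineSpan ℝ S).direction, ⟪p - q', w⟫ = 0) : q = q' := by
  have hd : q - q' ∈ (affineSpan ℝ S).direction := by
    simpa [vsub_eq_sub] using AffineSubspace.vsub_mem_direction hq hq'
  have h : ⟪q - q', q - q'⟫ = 0 := by
    have e : ⟪q - q', q - q'⟫ = ⟪p - q', q - q'⟫ - ⟪p - q, q - q'⟫ := by
      rw [← inner_sub_left]; congr 1; abel
    rw [e, h1 _ hd, h2 _ hd, sub_zero]
  exact sub_eq_zero.mp (inner_self_eq_zero.mp h)

lemma not_mem_hull (v0 v1 v2 q n : E3) (c : ℝ) (h0 : ⟪n, v0⟫ ≤ c) (h1 : ⟪n, v1⟫ ≤ c)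
    (h2 : ⟪n, v2⟫ ≤ c) (hq : c < ⟪n, q⟫) :
    q ∉ convexHull ℝ ({v0, v1, v2} : Set E3) := by
  intro hmem
  have hconv : Convex ℝ {x : E3 | ⟪n, x⟫ ≤ c} :=
    convex_halfSpace_le ⟨fun x y => inner_add_right n x y, fun r x => real_inner_smul_right n x r⟩ c
  have hsub : ({v0, v1, v2} : Set E3) ⊆ {x : E3 | ⟪n, x⟫ ≤ c} := by
    rintro x (rfl | rfl | rfl) <;> assumption
  have := convexHull_min hsub hconv hmem
  exact absurd this (by simpa using (not_le.mpr hq))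

/-- If some point of the plane of a face projects from `p` orthogonally and lies outside
the convex hull of the face, then `p` is not stable on that face. -/
lemma not_stableOn (p v0 v1 v2 q' : E3) (hq' : q' ∈ affineSpan ℝ ({v0, v1, v2} : Set E3))
    (horth : ∀ w ∈ (affineSpan ℝ ({v0, v1, v2} : Set E3)).direction, ⟪p - q', w⟫ = 0)
    (hout : q' ∉ convexHull ℝ ({v0, v1, v2} : Set E3)) : ¬ StableOn p v0 v1 v2 := by
  rintro ⟨q, hqI, hqO⟩
  have hqc : q ∈ convexHull ℝ ({v0, v1, v2} : Set E3) := intrinsicInterior_subset hqI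
  have hqs : q ∈ affineSpan ℝ ({v0, v1, v2} : Set E3) :=
    convexHull_subset_affineSpan _ hqc
  have : q = q' := proj_unique p q q' _ hqs hq' hqO horth
  exact hout (this ▸ hqc)

/-- The isometric inclusion of `ℝ²` into `ℝ³` as the plane `z = 0`. -/
def incl : E2 →ₗᵢ[ℝ] E3 where
  toLinearMap :=
  { toFun := fun x => !₂[x 0, x 1, 0]
    map_add' := by intro x y; ext i; fin_cases i <;> simp
    map_smul' := by intro c x; ext i; fin_cases i <;> simp }
  norm_map' := by
    intro x
    rw [EuclideanSpace.norm_eq, EuclideanSpace.norm_eq, Fin.sum_univ_three, Fin.sum_univ_two]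
    norm_num [Matrix.cons_val_two, Matrix.cons_val_three, Matrix.tail_cons, Matrix.head_cons]

def phi : E2 →ᵃⁱ[ℝ] E3 := incl.toAffineIsometry

/-! The concrete tetrahedron. -/

def vA : E3 := !₂[0,0,0]
def vB : E3 := !₂[9,0,0]
def vC : E3 := !₂[-26,8,0]
def vD : E3 := !₂[16,-1,3]
def pt : E3 := !₂[11/2, 1/4, 1/100]
def Q3 : E3 := !₂[11/2, 1/4, 0]

def a0 : E2 := !₂[0,0]
def a1 : E2 := !₂[9,0]
def a2 : E2 := !₂[-26,8]
def q2 : E2 := !₂[11/2, 1/4]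

lemma phi_a0 : phi a0 = vA := by ext i; fin_cases i <;> simp [phi, incl, a0, vA]
lemma phi_a1 : phi a1 = vB := by ext i; fin_cases i <;> simp [phi, incl, a1, vB]
lemma phi_a2 : phi a2 = vC := by ext i; fin_cases i <;> simp [phi, incl, a2, vC]
lemma phi_q2 : phi q2 = Q3 := by ext i; fin_cases i <;> simp [phi, incl, q2, Q3]

lemma hAI : AffineIndependent ℝ ![vA, vB, vC, vD] := by
  rw [affineIndependent_iff_of_fintype]
  intro w hsum hcomb
  rw [Finset.univ.weightedVSub_eq_linear_combination hsum] at hcomb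
  have h0 := congrArg (fun v => v 0) hcomb
  have h1 := congrArg (fun v => v 1) hcomb
  have h2 := congrArg (fun v => v 2) hcomb
  rw [Fin.sum_univ_four] at hsum
  simp only [Fin.sum_univ_four, Matrix.cons_val_zero, Matrix.cons_val_one, Matrix.head_cons,
    Matrix.cons_val_two, Matrix.tail_cons, Matrix.cons_val_three, vA, vB, vC, vD,
    PiLp.add_apply, PiLp.smul_apply, PiLp.zero_apply, smul_eq_mul, PiLp.toLp_apply] at h0 h1 h2
  have e3 : w 3 = 0 := by linarith
  have e2 : w 2 = 0 := by linarith
  have e1 : w 1 = 0 := by linarith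
  have e0 : w 0 = 0 := by linarith
  intro i
  fin_cases i <;> first | exact e0 | exact e1 | exact e2 | exact e3

lemma hAI2 : AffineIndependent ℝ ![a0, a1, a2] := by
  rw [affineIndependent_iff_of_fintype]
  intro w hsum hcomb
  rw [Finset.univ.weightedVSub_eq_linear_combination hsum] at hcomb
  have h0 := congrArg (fun v => v 0) hcomb
  have h1 := congrArg (fun v => v 1) hcomb
  rw [Fin.sum_univ_three] at hsum
  simp only [Fin.sum_univ_three, Matrix.cons_val_zero, Matrix.cons_val_one, Matrix.head_cons,
    Matrix.cons_val_two, Matrix.tail_cons, a0, a1, a2,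
    PiLp.add_apply, PiLp.smul_apply, PiLp.zero_apply, smul_eq_mul, PiLp.toLp_apply] at h0 h1
  have e2 : w 2 = 0 := by linarith
  have e1 : w 1 = 0 := by linarith
  have e0 : w 0 = 0 := by linarith
  intro i
  fin_cases i <;> first | exact e0 | exact e1 | exact e2

lemma p_interior : pt ∈ interior (convexHull ℝ ({vA, vB, vC, vD} : Set E3)) := by
  have htot : affineSpan ℝ (Set.range ![vA, vB, vC, vD]) = ⊤ := by
    rw [hAI.affineSpan_eq_top_iff_card_eq_finrank_add_one]
    simp [finrank_euclideanSpace_fin]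
  let b : AffineBasis (Fin 4) ℝ E3 := ⟨![vA, vB, vC, vD], hAI, htot⟩
  have hrange : Set.range ⇑b = ({vA, vB, vC, vD} : Set E3) := by
    show Set.range ![vA, vB, vC, vD] = _
    simp [Matrix.range_cons, Matrix.range_empty]
    ext x; simp; tauto
  have hP : pt = Finset.univ.affineCombination ℝ ![vA, vB, vC, vD]
      ![161/600, 209/300, 19/600, 1/300] := by
    rw [Finset.affineCombination_eq_linear_combination _ _ _ (by norm_num [Fin.sum_univ_four, Matrix.cons_val_two, Matrix.cons_val_three, Matrix.tail_cons, Matrix.head_cons])]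
    ext i
    fin_cases i <;>
      simp [Fin.sum_univ_four, vA, vB, vC, vD, pt] <;> norm_num
  rw [← hrange, b.interior_convexHull]
  intro i
  have : b.coord i pt = ![161/600, 209/300, 19/600, (1:ℝ)/300] i := by
    rw [hP]
    exact b.coord_apply_combination_of_mem (Finset.mem_univ i) (by norm_num [Fin.sum_univ_four, Matrix.cons_val_two, Matrix.cons_val_three, Matrix.tail_cons, Matrix.head_cons])
  rw [this]
  fin_cases i <;> norm_num

lemma hq2 : q2 ∈ interior (convexHull ℝ ({a0, a1, a2} : Set E2)) := by
  have htot : affineSpan ℝ (Set.range ![a0, a1, a2]) = ⊤ := by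
    rw [hAI2.affineSpan_eq_top_iff_card_eq_finrank_add_one]
    simp [finrank_euclideanSpace_fin]
  let b : AffineBasis (Fin 3) ℝ E2 := ⟨![a0, a1, a2], hAI2, htot⟩
  have hrange : Set.range ⇑b = ({a0, a1, a2} : Set E2) := by
    show Set.range ![a0, a1, a2] = _
    simp [Matrix.range_cons, Matrix.range_empty]
    ext x; simp; tauto
  have hq : q2 = Finset.univ.affineCombination ℝ ![a0, a1, a2] ![77/288, 101/144, 1/32] := by
    rw [Finset.affineCombination_eq_linear_combination _ _ _ (by norm_num [Fin.sum_univ_three, Matrix.cons_val_two, Matrix.cons_val_three, Matrix.tail_cons, Matrix.head_cons])]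
    ext i
    fin_cases i <;> simp [Fin.sum_univ_three, a0, a1, a2, q2] <;> norm_num
  rw [← hrange, b.interior_convexHull]
  intro i
  have : b.coord i q2 = ![77/288, 101/144, (1:ℝ)/32] i := by
    rw [hq]
    exact b.coord_apply_combination_of_mem (Finset.mem_univ i) (by norm_num [Fin.sum_univ_three, Matrix.cons_val_two, Matrix.cons_val_three, Matrix.tail_cons, Matrix.head_cons])
  rw [this]
  fin_cases i <;> norm_num

lemma Q3_mem : Q3 ∈ intrinsicInterior ℝ (convexHull ℝ ({vA, vB, vC} : Set E3)) := by
  have himg : ⇑phi '' ({a0, a1, a2} : Set E2) = ({vA, vB, vC} : Set E3) := by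
    simp [Set.image_insert_eq, Set.image_singleton, phi_a0, phi_a1, phi_a2]
  have hch : convexHull ℝ (⇑phi '' ({a0, a1, a2} : Set E2))
      = ⇑phi '' (convexHull ℝ ({a0, a1, a2} : Set E2)) := by
    have : ⇑phi = ⇑phi.toAffineMap := rfl
    rw [this, ← phi.toAffineMap.image_convexHull]
  rw [← himg, hch, phi.image_intrinsicInterior]
  exact ⟨q2, interior_subset_intrinsicInterior hq2, phi_q2⟩

lemma stable3 : StableOn pt vA vB vC := by
  refine ⟨Q3, Q3_mem, orth_span _ _ _ _ ?_ ?_⟩ <;>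
  · rw [inner3]
    simp [vA, vB, vC, pt, Q3]

lemma unstable0 : ¬ StableOn pt vB vC vD := by
  set q' : E3 := !₂[62613/11150, 3369/4460, -2031/22300] with hq'
  have hmem : q' ∈ affineSpan ℝ ({vB, vC, vD} : Set E3) := by
    have : q' = (2021/22300 : ℝ) • (vC - vB) + (-677/22300 : ℝ) • (vD - vB) + vB := by
      ext i; fin_cases i <;> norm_num [hq', vB, vC, vD]
    rw [this]; exact mem_span_triple _ _ _ _ _
  refine not_stableOn pt vB vC vD q' hmem (orth_span _ _ _ _ ?_ ?_) ?_
  · rw [inner3]; norm_num [vB, vC, vD, pt, hq', Matrix.cons_val_two, Matrix.cons_val_three, Matrix.tail_cons, Matrix.head_cons]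
  · rw [inner3]; norm_num [vB, vC, vD, pt, hq', Matrix.cons_val_two, Matrix.cons_val_three, Matrix.tail_cons, Matrix.head_cons]
  · refine not_mem_hull vB vC vD q' !₂[-168, -735, -3867] (-1512) ?_ ?_ ?_ ?_ <;>
    · rw [inner3]; norm_num [vB, vC, vD, hq', Matrix.cons_val_two, Matrix.cons_val_three, Matrix.tail_cons, Matrix.head_cons]

lemma unstable1 : ¬ StableOn pt vA vC vD := by
  set q' : E3 := !₂[20889/3950, -3459/7900, 1437/1580] with hq'
  have hmem : q' ∈ affineSpan ℝ ({vA, vC, vD} : Set E3) := by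
    have : q' = (-133/7900 : ℝ) • (vC - vA) + (479/1580 : ℝ) • (vD - vA) + vA := by
      ext i; fin_cases i <;> norm_num [hq', vA, vC, vD]
    rw [this]; exact mem_span_triple _ _ _ _ _
  refine not_stableOn pt vA vC vD q' hmem (orth_span _ _ _ _ ?_ ?_) ?_
  · rw [inner3]; norm_num [vA, vC, vD, pt, hq', Matrix.cons_val_two, Matrix.cons_val_three, Matrix.tail_cons, Matrix.head_cons]
  · rw [inner3]; norm_num [vA, vC, vD, pt, hq', Matrix.cons_val_two, Matrix.cons_val_three, Matrix.tail_cons, Matrix.head_cons]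
  · refine not_mem_hull vA vC vD q' !₂[66, -852, -636] 0 ?_ ?_ ?_ ?_ <;>
    · rw [inner3]; norm_num [vA, vC, vD, hq', Matrix.cons_val_two, Matrix.cons_val_three, Matrix.tail_cons, Matrix.head_cons]

lemma unstable2 : ¬ StableOn pt vA vB vD := by
  set q' : E3 := !₂[11/2, 11/500, -33/500] with hq'
  have hmem : q' ∈ affineSpan ℝ ({vA, vB, vD} : Set E3) := by
    have : q' = (1463/2250 : ℝ) • (vB - vA) + (-11/500 : ℝ) • (vD - vA) + vA := by
      ext i; fin_cases i <;> norm_num [hq', vA, vB, vD]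
    rw [this]; exact mem_span_triple _ _ _ _ _
  refine not_stableOn pt vA vB vD q' hmem (orth_span _ _ _ _ ?_ ?_) ?_
  · rw [inner3]; norm_num [vA, vB, vD, pt, hq', Matrix.cons_val_two, Matrix.cons_val_three, Matrix.tail_cons, Matrix.head_cons]
  · rw [inner3]; norm_num [vA, vB, vD, pt, hq', Matrix.cons_val_two, Matrix.cons_val_three, Matrix.tail_cons, Matrix.head_cons]
  · refine not_mem_hull vA vB vD q' !₂[0, 1, -3] 0 ?_ ?_ ?_ ?_ <;>
    · rw [inner3]; norm_num [vA, vB, vD, hq', Matrix.cons_val_two, Matrix.cons_val_three, Matrix.tail_cons, Matrix.head_cons]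

end MonostableAux

/-- **Monostable tetrahedra exist**: there are four affinely independent points
`A, B, C, D` in ℝ³ and a load point `p` in the interior of their convex hull
such that the tetrahedron is stable on exactly one of its four faces. -/
theorem exists_monostable_tetrahedron :
    ∃ A B C D p : E3,
      AffineIndependent ℝ ![A, B, C, D] ∧
      p ∈ interior (convexHull ℝ ({A, B, C, D} : Set E3)) ∧
      (∃! i : Fin 4, FaceStable A B C D p i) := by
  refine ⟨MonostableAux.vA, MonostableAux.vB, MonostableAux.vC, MonostableAux.vD,
    MonostableAux.pt, MonostableAux.hAI, MonostableAux.p_interior, 3,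
    MonostableAux.stable3, ?_⟩
  intro j hj
  fin_cases j
  · exact absurd hj MonostableAux.unstable0
  · exact absurd hj MonostableAux.unstable1
  · exact absurd hj MonostableAux.unstable2
  · rfl
end
end

section
/- If a tetrahedron has an obtuse path, i.e. its vertices can be labeled a, b, c, d so that the edges ab, bc and cd are all obtuse, then the tetrahedron is loadable: there exists a point p in its interior such that the tetrahedron is stable on exactly one face with load p. -/
open RealInnerProductSpace

noncomputable section

/-! ### Auxiliary lemmas -/

lemma proj_orth (u v x : E3) (hg : ⟪u,u⟫ * ⟪v,v⟫ - ⟪u,v⟫ * ⟪u,v⟫ ≠ 0) :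
    ⟪x - ((⟪x,u⟫*⟪v,v⟫ - ⟪x,v⟫*⟪u,v⟫)/(⟪u,u⟫*⟪v,v⟫-⟪u,v⟫*⟪u,v⟫))•u
       - ((⟪x,v⟫*⟪u,u⟫ - ⟪x,u⟫*⟪u,v⟫)/(⟪u,u⟫*⟪v,v⟫-⟪u,v⟫*⟪u,v⟫))•v, u⟫ = 0 ∧
    ⟪x - ((⟪x,u⟫*⟪v,v⟫ - ⟪x,v⟫*⟪u,v⟫)/(⟪u,u⟫*⟪v,v⟫-⟪u,v⟫*⟪u,v⟫))•u
       - ((⟪x,v⟫*⟪u,u⟫ - ⟪x,u⟫*⟪u,v⟫)/(⟪u,u⟫*⟪v,v⟫-⟪u,v⟫*⟪u,v⟫))•v, v⟫ = 0 := by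
  constructor <;>
  · rw [inner_sub_left, inner_sub_left, real_inner_smul_left, real_inner_smul_left]
    simp only [real_inner_comm v u] at hg ⊢
    revert hg
    generalize ⟪x,u⟫ = A; generalize ⟪x,v⟫ = B; generalize ⟪u,u⟫ = C
    generalize ⟪v,u⟫ = D; generalize ⟪v,v⟫ = F
    intro hg
    obtain ⟨G, hG⟩ : ∃ G, G = C * F - D * D := ⟨_, rfl⟩
    rw [← hG] at hg ⊢; field_simp; rw [hG]; ring

lemma gram_pos (u v : E3) (h : ∀ μ lam : ℝ, μ•u + lam•v = 0 → μ = 0 ∧ lam = 0) :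
    0 < ⟪u,u⟫*⟪v,v⟫-⟪u,v⟫*⟪u,v⟫ := by
  have hu : u ≠ 0 := by
    intro h0
    have := (h 1 0 (by simp [h0])).1
    norm_num at this
  have hu2 : 0 < ⟪u,u⟫ := by
    rcases lt_or_eq_of_le (real_inner_self_nonneg (x := u)) with h1 | h1
    · exact h1
    · exact absurd (real_inner_self_nonpos.1 h1.ge) hu
  by_contra hle
  push_neg at hle
  set w : E3 := ⟪u,u⟫ • v - ⟪v,u⟫ • u with hw
  have hww : ⟪w,w⟫ = ⟪u,u⟫ * (⟪u,u⟫*⟪v,v⟫-⟪u,v⟫*⟪u,v⟫) := by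
    simp only [hw, inner_sub_left, inner_sub_right, real_inner_smul_left, real_inner_smul_right]
    rw [real_inner_comm v u]; ring
  have hw0 : w = 0 := real_inner_self_nonpos.1 (by nlinarith)
  have := h (-⟪v,u⟫) ⟪u,u⟫ (by
    have : (0:E3) = ⟪u,u⟫ • v - ⟪v,u⟫ • u := hw0 ▸ hw
    linear_combination (norm := module) -this)
  linarith [this.2]

lemma tcoef_neg (u v x : E3) (hg : 0 < ⟪u,u⟫ * ⟪v,v⟫ - ⟪u,v⟫ * ⟪u,v⟫)
    (hobt : ⟪x - (⟪x,u⟫/⟪u,u⟫) • u, v - (⟪v,u⟫/⟪u,u⟫) • u⟫ < 0) :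
    (⟪x,v⟫ * ⟪u,u⟫ - ⟪x,u⟫ * ⟪u,v⟫) / (⟪u,u⟫ * ⟪v,v⟫ - ⟪u,v⟫ * ⟪u,v⟫) < 0 := by
  have huu : 0 < ⟪u,u⟫ := by
    rcases lt_or_eq_of_le (real_inner_self_nonneg (x := u)) with h1 | h1
    · exact h1
    · nlinarith [real_inner_self_nonneg (x := v), sq_nonneg ⟪u,v⟫]
  apply div_neg_of_neg_of_pos _ hg
  have key : ⟪x - (⟪x,u⟫/⟪u,u⟫) • u, v - (⟪v,u⟫/⟪u,u⟫) • u⟫ * ⟪u,u⟫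
      = ⟪x,v⟫ * ⟪u,u⟫ - ⟪x,u⟫ * ⟪u,v⟫ := by
    rw [inner_sub_left, inner_sub_right, inner_sub_right, real_inner_smul_left,
      real_inner_smul_left, real_inner_smul_right, real_inner_smul_right]
    simp only [real_inner_comm v u, real_inner_comm x u]
    have hne : ⟪u,u⟫ ≠ (0:ℝ) := ne_of_gt huu
    generalize ⟪x,v⟫ = A
    generalize hB : ⟪x,u⟫ = B
    generalize ⟪v,u⟫ = D
    generalize hC : ⟪u,u⟫ = C
    rw [hC] at hne
    field_simp
    ring
  rw [← key]
  exact mul_neg_of_neg_of_pos hobt huu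

lemma li4 {a b c d : E3} (h : AffineIndependent ℝ ![a, b, c, d]) (w0 w1 w2 w3 : ℝ)
    (hsum : w0 + w1 + w2 + w3 = 0)
    (hcomb : w0 • a + w1 • b + w2 • c + w3 • d = 0) :
    w0 = 0 ∧ w1 = 0 ∧ w2 = 0 ∧ w3 = 0 := by
  have := affineIndependent_iff.1 h Finset.univ ![w0, w1, w2, w3] ?_ ?_
  · exact ⟨this 0 (Finset.mem_univ _), this 1 (Finset.mem_univ _),
      this 2 (Finset.mem_univ _), this 3 (Finset.mem_univ _)⟩
  · rw [Fin.sum_univ_four]; simpa using hsum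
  · rw [Fin.sum_univ_four]; simpa using hcomb

lemma vectorSpan3_le (v₁ v₂ v₃ : E3) :
    vectorSpan ℝ ({v₁,v₂,v₃} : Set E3) ≤ Submodule.span ℝ {v₂ - v₁, v₃ - v₁} := by
  have hle : affineSpan ℝ ({v₁,v₂,v₃} : Set E3) ≤
      AffineSubspace.mk' v₁ (Submodule.span ℝ {v₂ - v₁, v₃ - v₁}) := by
    rw [affineSpan_le]
    rintro z (rfl | rfl | rfl) <;> simp only [SetLike.mem_coe]
    · exact AffineSubspace.self_mem_mk' _ _
    · rw [AffineSubspace.mem_mk']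
      exact Submodule.subset_span (by simp [vsub_eq_sub])
    · rw [AffineSubspace.mem_mk']
      exact Submodule.subset_span (by simp [vsub_eq_sub])
  have := AffineSubspace.direction_le hle
  rwa [direction_affineSpan, AffineSubspace.direction_mk'] at this

lemma orth_dir (p q : E3) (s : Set E3) (u v : E3)
    (hle : vectorSpan ℝ s ≤ Submodule.span ℝ ({u, v} : Set E3))
    (hu : ⟪p - q, u⟫ = 0) (hv : ⟪p - q, v⟫ = 0) :
    ∀ w ∈ (affineSpan ℝ s).direction, ⟪p - q, w⟫ = 0 := by
  have key : ∀ w ∈ Submodule.span ℝ ({u, v} : Set E3), ⟪p - q, w⟫ = 0 := by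
    intro w hw
    induction hw using Submodule.span_induction with
    | mem z hz => rcases hz with rfl | rfl <;> assumption
    | zero => exact inner_zero_right _
    | add y z _ _ hy hz => rw [inner_add_right, hy, hz, add_zero]
    | smul r y _ hy => rw [real_inner_smul_right, hy, mul_zero]
  rw [direction_affineSpan]
  intro w hw
  exact key w (hle hw)

lemma mem_span3 (s : Set E3) (z : E3) (hz : z ∈ s) (u v : E3)
    (hu : u ∈ vectorSpan ℝ s) (hv : v ∈ vectorSpan ℝ s) (x y : ℝ) (q : E3)
    (hq : q = (x • u + y • v) +ᵥ z) : q ∈ affineSpan ℝ s := by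
  subst hq
  refine AffineSubspace.vadd_mem_of_mem_direction ?_ (mem_affineSpan ℝ hz)
  rw [direction_affineSpan]
  exact Submodule.add_mem _ (Submodule.smul_mem _ _ hu) (Submodule.smul_mem _ _ hv)

lemma sub_mem_vectorSpan3 {s : Set E3} {z₁ z₂ : E3} (h₁ : z₁ ∈ s) (h₂ : z₂ ∈ s) :
    z₁ - z₂ ∈ vectorSpan ℝ s := by
  have := vsub_mem_vectorSpan ℝ h₁ h₂
  rwa [vsub_eq_sub] at this

lemma not_stableOn (p q v₁ v₂ v₃ : E3)
    (hqS : q ∈ affineSpan ℝ ({v₁,v₂,v₃} : Set E3))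
    (hu : ⟪p - q, v₂ - v₁⟫ = 0) (hv : ⟪p - q, v₃ - v₁⟫ = 0)
    (hnc : q ∉ convexHull ℝ ({v₁,v₂,v₃} : Set E3)) : ¬ StableOn p v₁ v₂ v₃ := by
  rintro ⟨q', hq', horth⟩
  have hq'c : q' ∈ convexHull ℝ ({v₁,v₂,v₃} : Set E3) := intrinsicInterior_subset hq'
  have hq'S : q' ∈ affineSpan ℝ ({v₁,v₂,v₃} : Set E3) :=
    convexHull_subset_affineSpan _ hq'c
  have hd : q' - q ∈ (affineSpan ℝ ({v₁,v₂,v₃} : Set E3)).direction := by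
    have := AffineSubspace.vsub_mem_direction hq'S hqS
    rwa [vsub_eq_sub] at this
  have h1 : ⟪p - q', q' - q⟫ = 0 := horth _ hd
  have h2 : ⟪p - q, q' - q⟫ = 0 :=
    orth_dir p q ({v₁,v₂,v₃} : Set E3) (v₂ - v₁) (v₃ - v₁)
      (vectorSpan3_le v₁ v₂ v₃) hu hv _ hd
  have h3 : ⟪q' - q, q' - q⟫ = (0:ℝ) := by
    have heq : ⟪q' - q, q' - q⟫ = ⟪p - q, q' - q⟫ - ⟪p - q', q' - q⟫ := by
      rw [← inner_sub_left]; congr 1; abel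
    rw [heq, h1, h2, sub_zero]
  have : q' = q := by
    have := real_inner_self_nonpos.1 h3.le
    rwa [sub_eq_zero] at this
  exact hnc (this ▸ hq'c)

lemma stableOn_of (p v₁ v₂ v₃ : E3) (h3 : AffineIndependent ℝ ![v₁, v₂, v₃])
    {x y : ℝ} (hx : 0 < x) (hy : 0 < y) (hxy : x + y < 1) (q : E3)
    (hq : q = (x • (v₂ - v₁) + y • (v₃ - v₁)) +ᵥ v₁)
    (hu : ⟪p - q, v₂ - v₁⟫ = 0) (hv : ⟪p - q, v₃ - v₁⟫ = 0) :
    StableOn p v₁ v₂ v₃ := by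
  set u : E3 := v₂ - v₁ with hu_def
  set v : E3 := v₃ - v₁ with hv_def
  set W : Submodule ℝ E3 := Submodule.span ℝ ({u, v} : Set E3) with hW
  have huW : u ∈ W := Submodule.subset_span (by simp)
  have hvW : v ∈ W := Submodule.subset_span (by simp)
  set u' : W := ⟨u, huW⟩
  set v' : W := ⟨v, hvW⟩
  set pts : Fin 3 → W := ![0, u', v'] with hpts
  set φ : W →ᵃⁱ[ℝ] E3 :=
    (AffineIsometryEquiv.constVAdd ℝ E3 v₁).toAffineIsometry.comp
      W.subtypeₗᵢ.toAffineIsometry with hφdef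
  have hφ : ∀ w : W, φ w = v₁ + (w : E3) := by
    intro w
    show v₁ +ᵥ ((w : E3)) = v₁ + (w : E3)
    rw [vadd_eq_add]
  have hcomp : (⇑φ ∘ pts) = ![v₁, v₂, v₃] := by
    funext i
    fin_cases i <;> simp [hφ, hpts, hu_def, hv_def] <;> simp [u', v', hu_def, hv_def] <;> abel
  have hind : AffineIndependent ℝ pts := by
    have hinj : Function.Injective ⇑φ.toAffineMap := by
      rw [AffineIsometry.coe_toAffineMap]; exact φ.injective
    have := (AffineMap.affineIndependent_iff φ.toAffineMap hinj (p := pts)).1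
    apply this
    rw [AffineIsometry.coe_toAffineMap, hcomp]
    exact h3
  have hsp : Submodule.span ℝ ({u', v'} : Set W) = ⊤ := by
    apply Submodule.map_injective_of_injective W.injective_subtype
    rw [Submodule.map_span, Submodule.map_subtype_top, Set.image_pair]
    exact hW.symm
  have htop : affineSpan ℝ (Set.range pts) = ⊤ := by
    rw [AffineSubspace.affineSpan_eq_top_iff_vectorSpan_eq_top_of_nonempty ℝ _ _
      (Set.range_nonempty _)]
    rw [eq_top_iff, ← hsp]
    apply Submodule.span_le.2
    rintro z (rfl | rfl)
    · have := vsub_mem_vectorSpan ℝ (Set.mem_range_self (f := pts) 1)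
        (Set.mem_range_self (f := pts) 0)
      simpa [hpts] using this
    · have := vsub_mem_vectorSpan ℝ (Set.mem_range_self (f := pts) 2)
        (Set.mem_range_self (f := pts) 0)
      simpa [hpts] using this
  set basis : AffineBasis (Fin 3) ℝ W := ⟨pts, hind, htop⟩ with hbasis
  set wts : Fin 3 → ℝ := ![1 - x - y, x, y] with hwts
  have hwsum : ∑ i, wts i = 1 := by
    rw [Fin.sum_univ_three]; simp [hwts]; ring
  set qW : W := Finset.univ.affineCombination ℝ pts wts with hqW
  have hcoord : ∀ i, 0 < basis.coord i qW := by
    intro i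
    have : basis.coord i qW = wts i := by
      rw [hqW]
      exact basis.coord_apply_combination_of_mem (Finset.mem_univ i) hwsum
    rw [this]
    fin_cases i <;> simp [hwts] <;> linarith
  have hqint : qW ∈ interior (convexHull ℝ (Set.range pts)) := by
    have := basis.interior_convexHull
    have hco : Set.range ⇑basis = Set.range pts := rfl
    rw [hco] at this
    rw [this]
    exact hcoord
  have hq2 : qW ∈ intrinsicInterior ℝ (convexHull ℝ (Set.range pts)) :=
    interior_subset_intrinsicInterior hqint
  have himg : ⇑φ '' (convexHull ℝ (Set.range pts)) = convexHull ℝ ({v₁,v₂,v₃} : Set E3) := by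
    rw [← AffineIsometry.coe_toAffineMap, AffineMap.image_convexHull,
      AffineIsometry.coe_toAffineMap, ← Set.range_comp, hcomp]
    have hr : Set.range ![v₁, v₂, v₃] = ({v₁, v₂, v₃} : Set E3) := by
      ext z
      simp [Matrix.range_cons, Matrix.range_empty]
      tauto
    rw [hr]
  have hφq : φ qW = q := by
    have hlin : qW = (1 - x - y) • (0:W) + x • u' + y • v' := by
      rw [hqW, Finset.univ.affineCombination_eq_linear_combination _ _ hwsum,
        Fin.sum_univ_three]
      simp [hwts, hpts]
    rw [hφ, hlin, hq]
    push_cast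
    simp [vadd_eq_add]
    abel
  refine ⟨q, ?_, orth_dir p q _ u v (vectorSpan3_le v₁ v₂ v₃) hu hv⟩
  rw [← himg, AffineIsometry.image_intrinsicInterior]
  exact ⟨qW, hq2, hφq⟩

/-! ### Arithmetic helper lemmas -/

lemma eps0 {e : ℝ} (h0 : 0 < e) (hh : e < 1/2) :
    1/8 ≤ 1-e-e^2-e^3 ∧ 1-e-e^2-e^3 ≤ 1 := by
  constructor <;> nlinarith

lemma eps1 {e t w : ℝ} (he : e < -t/8) (ht : t < 0) (hw : 1/8 ≤ w) (hw1 : w ≤ 1) :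
    e + w*t < 0 := by nlinarith

lemma eps2 {e t : ℝ} (h0 : 0 < e) (he : e < -t) : e^3 + e^2*t < 0 := by
  have h1 : e^2*(e+t) < 0 := mul_neg_of_pos_of_neg (by positivity) (by linarith)
  nlinarith [h1]

lemma eps3 {e t : ℝ} (h0 : 0 < e) (he : e < -t) : e^2 + e*t < 0 := by
  have h1 : e*(e+t) < 0 := mul_neg_of_pos_of_neg h0 (by linarith)
  nlinarith [h1]

lemma eps_main {e c1 c2 : ℝ} (h0 : 0 < e) (hh : e < 1/2) (hM : e*(|c1|+|c2|+1) < 1/8) :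
    0 < (1-e-e^2-e^3) + e^3*c1 ∧ 0 < e + e^3*c2 ∧
      ((1-e-e^2-e^3) + e^3*c1) + (e + e^3*c2) < 1 := by
  have h3 : e^3 ≤ e := by
    nlinarith [mul_nonneg (mul_nonneg h0.le (by linarith : (0:ℝ) ≤ 1 - e))
      (by linarith : (0:ℝ) ≤ 1 + e)]
  have q2 : e^2 ≤ e := by nlinarith
  have hec1 : e*|c1| < 1/8 := by nlinarith [abs_nonneg c1, abs_nonneg c2]
  have hec2 : e*|c2| < 1/8 := by nlinarith [abs_nonneg c1, abs_nonneg c2]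
  have hb1l : -(e^2*(1/8)) ≤ e^3*c1 := by
    nlinarith [mul_le_mul_of_nonneg_left hec1.le (sq_nonneg e),
      mul_le_mul_of_nonneg_left (neg_abs_le c1) (pow_nonneg h0.le 3)]
  have hb1u : e^3*c1 ≤ e^2*(1/8) := by
    nlinarith [mul_le_mul_of_nonneg_left hec1.le (sq_nonneg e),
      mul_le_mul_of_nonneg_left (le_abs_self c1) (pow_nonneg h0.le 3)]
  have hb2l : -(e^2*(1/8)) ≤ e^3*c2 := by
    nlinarith [mul_le_mul_of_nonneg_left hec2.le (sq_nonneg e),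
      mul_le_mul_of_nonneg_left (neg_abs_le c2) (pow_nonneg h0.le 3)]
  have hb2u : e^3*c2 ≤ e^2*(1/8) := by
    nlinarith [mul_le_mul_of_nonneg_left hec2.le (sq_nonneg e),
      mul_le_mul_of_nonneg_left (le_abs_self c2) (pow_nonneg h0.le 3)]
  refine ⟨by nlinarith, by nlinarith, by nlinarith⟩

/-! ### Main theorem -/

set_option maxHeartbeats 2000000 in
/-- **A tetrahedron with an obtuse path is loadable**: if the edges `ab`, `bc`,
`cd` of the tetrahedron `abcd` are all obtuse, then there is a point `p` in the
interior of the tetrahedron such that the tetrahedron with load `p` is stable on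
exactly one face. -/
theorem obtuse_path_tetrahedron_is_loadable (a b c d : E3)
    (h : AffineIndependent ℝ ![a, b, c, d])
    (hab : ObtuseEdge a b c d) (hbc : ObtuseEdge b c a d) (hcd : ObtuseEdge c d a b) :
    ∃ p ∈ interior (convexHull ℝ ({a, b, c, d} : Set E3)),
      ∃! i : Fin 4, FaceStable a b c d p i := by
  classical
  -- affine independence of the face {a,c,d}
  have h_acd : AffineIndependent ℝ ![a, c, d] := by
    have := h.comp_embedding (⟨![0,2,3], by decide⟩ : Fin 3 ↪ Fin 4)
    convert this using 1
    funext i; fin_cases i <;> rfl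
  -- linear independence of edge pairs
  have hli_abd : ∀ μ lam : ℝ, μ•(b-a) + lam•(d-a) = 0 → μ = 0 ∧ lam = 0 := by
    intro μ lam hrel
    obtain ⟨_, h1, _, h3⟩ := li4 h (-(μ+lam)) μ 0 lam (by ring)
      (by linear_combination (norm := module) hrel)
    exact ⟨h1, h3⟩
  have hli_acd : ∀ μ lam : ℝ, μ•(c-a) + lam•(d-a) = 0 → μ = 0 ∧ lam = 0 := by
    intro μ lam hrel
    obtain ⟨_, _, h2, h3⟩ := li4 h (-(μ+lam)) 0 μ lam (by ring)
      (by linear_combination (norm := module) hrel)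
    exact ⟨h2, h3⟩
  have hli_abc : ∀ μ lam : ℝ, μ•(c-b) + lam•(a-b) = 0 → μ = 0 ∧ lam = 0 := by
    intro μ lam hrel
    obtain ⟨h0, _, h2, _⟩ := li4 h lam (-(μ+lam)) μ 0 (by ring)
      (by linear_combination (norm := module) hrel)
    exact ⟨h2, h0⟩
  have hli_bcd : ∀ μ lam : ℝ, μ•(d-c) + lam•(b-c) = 0 → μ = 0 ∧ lam = 0 := by
    intro μ lam hrel
    obtain ⟨_, h1, _, h3⟩ := li4 h 0 lam (-(μ+lam)) μ (by ring)
      (by linear_combination (norm := module) hrel)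
    exact ⟨h3, h1⟩
  -- Gram determinants
  have g_abd := gram_pos (b-a) (d-a) hli_abd
  have g_acd := gram_pos (c-a) (d-a) hli_acd
  have g_abc := gram_pos (c-b) (a-b) hli_abc
  have g_bcd := gram_pos (d-c) (b-c) hli_bcd
  -- projection coefficients
  set s2 : ℝ := (⟪c-a,b-a⟫*⟪d-a,d-a⟫ - ⟪c-a,d-a⟫*⟪b-a,d-a⟫)/(⟪b-a,b-a⟫*⟪d-a,d-a⟫-⟪b-a,d-a⟫*⟪b-a,d-a⟫) with hs2
  set t2 : ℝ := (⟪c-a,d-a⟫*⟪b-a,b-a⟫ - ⟪c-a,b-a⟫*⟪b-a,d-a⟫)/(⟪b-a,b-a⟫*⟪d-a,d-a⟫-⟪b-a,d-a⟫*⟪b-a,d-a⟫) with ht2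
  set s3 : ℝ := (⟪d-b,c-b⟫*⟪a-b,a-b⟫ - ⟪d-b,a-b⟫*⟪c-b,a-b⟫)/(⟪c-b,c-b⟫*⟪a-b,a-b⟫-⟪c-b,a-b⟫*⟪c-b,a-b⟫) with hs3
  set t3 : ℝ := (⟪d-b,a-b⟫*⟪c-b,c-b⟫ - ⟪d-b,c-b⟫*⟪c-b,a-b⟫)/(⟪c-b,c-b⟫*⟪a-b,a-b⟫-⟪c-b,a-b⟫*⟪c-b,a-b⟫) with ht3
  set s1 : ℝ := (⟪a-c,d-c⟫*⟪b-c,b-c⟫ - ⟪a-c,b-c⟫*⟪d-c,b-c⟫)/(⟪d-c,d-c⟫*⟪b-c,b-c⟫-⟪d-c,b-c⟫*⟪d-c,b-c⟫) with hs1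
  set t1 : ℝ := (⟪a-c,b-c⟫*⟪d-c,d-c⟫ - ⟪a-c,d-c⟫*⟪d-c,b-c⟫)/(⟪d-c,d-c⟫*⟪b-c,b-c⟫-⟪d-c,b-c⟫*⟪d-c,b-c⟫) with ht1
  set b1 : ℝ := (⟪b-a,c-a⟫*⟪d-a,d-a⟫ - ⟪b-a,d-a⟫*⟪c-a,d-a⟫)/(⟪c-a,c-a⟫*⟪d-a,d-a⟫-⟪c-a,d-a⟫*⟪c-a,d-a⟫) with hb1
  set b2 : ℝ := (⟪b-a,d-a⟫*⟪c-a,c-a⟫ - ⟪b-a,c-a⟫*⟪c-a,d-a⟫)/(⟪c-a,c-a⟫*⟪d-a,d-a⟫-⟪c-a,d-a⟫*⟪c-a,d-a⟫) with hb2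
  -- negativity of the tipping coefficients
  have ht2neg : t2 < 0 := by
    rw [ht2]; exact tcoef_neg (b-a) (d-a) (c-a) g_abd hab
  have ht3neg : t3 < 0 := by
    rw [ht3]
    refine tcoef_neg (c-b) (a-b) (d-b) g_abc ?_
    rw [real_inner_comm]
    exact hbc
  have ht1neg : t1 < 0 := by
    rw [ht1]; exact tcoef_neg (d-c) (b-c) (a-c) g_bcd hcd
  -- choice of ε
  set M : ℝ := |b1| + |b2| + 1 with hM
  have hMpos : 0 < M := by positivity
  obtain ⟨ε, hε0, hεhalf, hεt2, hεt3, hεt1, hεM⟩ :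
      ∃ ε : ℝ, 0 < ε ∧ ε < 1/2 ∧ ε < -t2/8 ∧ ε < -t3 ∧ ε < -t1 ∧ ε * M < 1/8 := by
    set δ : ℝ := min (min (1/2) (-t2/8)) (min (min (-t3) (-t1)) (1/(8*M))) with hδ
    have hδpos : 0 < δ := by
      apply lt_min
      · apply lt_min <;> [norm_num; linarith]
      · apply lt_min
        · apply lt_min <;> linarith
        · positivity
    refine ⟨δ/2, by linarith, ?_, ?_, ?_, ?_, ?_⟩
    · have : δ ≤ 1/2 := (min_le_left _ _).trans (min_le_left _ _)
      linarith
    · have : δ ≤ -t2/8 := (min_le_left _ _).trans (min_le_right _ _)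
      linarith
    · have : δ ≤ -t3 := (min_le_right _ _).trans ((min_le_left _ _).trans (min_le_left _ _))
      linarith
    · have : δ ≤ -t1 := (min_le_right _ _).trans ((min_le_left _ _).trans (min_le_right _ _))
      linarith
    · have h1 : δ ≤ 1/(8*M) := (min_le_right _ _).trans (min_le_right _ _)
      have h2 : δ/2 < 1/(8*M) := by linarith
      rw [lt_div_iff₀ (by positivity)] at h2
      linarith
  rw [hM] at hεM
  set wc : ℝ := 1 - ε - ε^2 - ε^3 with hwc
  have hwc8 : 1/8 ≤ wc := by rw [hwc]; exact (eps0 hε0 hεhalf).1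
  have hwc1 : wc ≤ 1 := by rw [hwc]; exact (eps0 hε0 hεhalf).2
  -- the load point
  set p : E3 := ε^2 • a + ε^3 • b + wc • c + ε • d with hp
  have hsump : ε^2 + ε^3 + wc + ε = 1 := by rw [hwc]; ring
  -- the 4-point affine basis
  have htop4 : affineSpan ℝ (Set.range ![a,b,c,d]) = ⊤ := by
    rw [h.affineSpan_eq_top_iff_card_eq_finrank_add_one]
    simp [finrank_euclideanSpace_fin]
  set B : AffineBasis (Fin 4) ℝ E3 := ⟨![a,b,c,d], h, htop4⟩ with hB
  have hrange4 : Set.range ⇑B = ({a,b,c,d} : Set E3) := by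
    have h1 : Set.range ⇑B = Set.range ![a,b,c,d] := rfl
    rw [h1]
    ext z
    simp [Matrix.range_cons, Matrix.range_empty]
    tauto
  have key : ∀ (w : Fin 4 → ℝ), (∑ i, w i = 1) →
      ∀ i, B.coord i (Finset.univ.affineCombination ℝ ![a,b,c,d] w) = w i :=
    fun w hw i => B.coord_apply_combination_of_mem (Finset.mem_univ i) hw
  -- p is interior
  have hw4 : ∑ i, (![ε^2, ε^3, wc, ε] : Fin 4 → ℝ) i = 1 := by
    rw [Fin.sum_univ_four]; simpa using hsump
  have hpcomb : p = Finset.univ.affineCombination ℝ ![a,b,c,d] ![ε^2, ε^3, wc, ε] := by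
    rw [Finset.univ.affineCombination_eq_linear_combination _ _ hw4, Fin.sum_univ_four]
    exact hp
  have hpint : p ∈ interior (convexHull ℝ ({a, b, c, d} : Set E3)) := by
    rw [← hrange4, B.interior_convexHull]
    intro i
    rw [hpcomb, key _ hw4 i]
    fin_cases i
    · show (0:ℝ) < ε^2; positivity
    · show (0:ℝ) < ε^3; positivity
    · show (0:ℝ) < wc; linarith
    · show (0:ℝ) < ε; exact hε0
  -- orthogonal projections onto the four face planes
  have hporth2 := proj_orth (b-a) (d-a) (c-a) (ne_of_gt g_abd)
  have hporth3 := proj_orth (c-b) (a-b) (d-b) (ne_of_gt g_abc)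
  have hporth1 := proj_orth (d-c) (b-c) (a-c) (ne_of_gt g_bcd)
  have hporthS := proj_orth (c-a) (d-a) (b-a) (ne_of_gt g_acd)
  -- ### Face 2 : abd is unstable
  have hnot2 : ¬ StableOn p a b d := by
    set S2 : ℝ := ε^3 + wc*s2 with hS2
    set T2 : ℝ := ε + wc*t2 with hT2
    set q2 : E3 := (S2 • (b-a) + T2 • (d-a)) +ᵥ a with hq2
    have hpq2 : p - q2 = wc • ((c-a) - s2•(b-a) - t2•(d-a)) := by
      rw [hp, hq2, hS2, hT2, hwc, vadd_eq_add]; module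
    have ho2u : ⟪p - q2, b-a⟫ = 0 := by
      rw [hpq2, real_inner_smul_left, hs2, ht2, hporth2.1, mul_zero]
    have ho2v : ⟪p - q2, d-a⟫ = 0 := by
      rw [hpq2, real_inner_smul_left, hs2, ht2, hporth2.2, mul_zero]
    have hT2neg : T2 < 0 := by rw [hT2]; exact eps1 hεt2 ht2neg hwc8 hwc1
    refine not_stableOn p q2 a b d
      (mem_span3 _ a (by simp) (b-a) (d-a)
        (sub_mem_vectorSpan3 (by simp) (by simp))
        (sub_mem_vectorSpan3 (by simp) (by simp)) S2 T2 q2 hq2) ho2u ho2v ?_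
    intro hmem
    have hsub : ({a,b,d} : Set E3) ⊆ ({a,b,c,d} : Set E3) := by
      intro z hz; simp at hz ⊢; tauto
    have hmem4 : q2 ∈ convexHull ℝ ({a,b,c,d} : Set E3) := convexHull_mono hsub hmem
    rw [← hrange4, B.convexHull_eq_nonneg_coord] at hmem4
    have hnn := hmem4 3
    have hw4' : ∑ i, (![1-S2-T2, S2, 0, T2] : Fin 4 → ℝ) i = 1 := by
      rw [Fin.sum_univ_four]
      show (1-S2-T2) + S2 + 0 + T2 = 1
      ring
    have hq2comb : q2 = Finset.univ.affineCombination ℝ ![a,b,c,d] ![1-S2-T2, S2, 0, T2] := by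
      rw [Finset.univ.affineCombination_eq_linear_combination _ _ hw4', Fin.sum_univ_four,
        hq2, vadd_eq_add]
      show _ = (1-S2-T2) • a + S2 • b + (0:ℝ) • c + T2 • d
      module
    rw [hq2comb, key _ hw4' 3] at hnn
    simp at hnn
    linarith
  -- ### Face 0 : bcd is unstable
  have hnot0 : ¬ StableOn p b c d := by
    set S1 : ℝ := ε + ε^2*s1 with hS1
    set V1 : ℝ := ε^3 + ε^2*t1 with hV1
    set q1 : E3 := (S1 • (d-c) + V1 • (b-c)) +ᵥ c with hq1
    have hpq1 : p - q1 = ε^2 • ((a-c) - s1•(d-c) - t1•(b-c)) := by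
      rw [hp, hq1, hS1, hV1, hwc, vadd_eq_add]; module
    have ho1u : ⟪p - q1, d-c⟫ = 0 := by
      rw [hpq1, real_inner_smul_left, hs1, ht1, hporth1.1, mul_zero]
    have ho1v : ⟪p - q1, b-c⟫ = 0 := by
      rw [hpq1, real_inner_smul_left, hs1, ht1, hporth1.2, mul_zero]
    have hocb : ⟪p - q1, c-b⟫ = 0 := by
      rw [show c-b = -(b-c) from by abel, inner_neg_right, ho1v, neg_zero]
    have hodb : ⟪p - q1, d-b⟫ = 0 := by
      rw [show d-b = (d-c) - (b-c) from by abel, inner_sub_right, ho1u, ho1v, sub_zero]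
    have hV1neg : V1 < 0 := by rw [hV1]; exact eps2 hε0 hεt1
    refine not_stableOn p q1 b c d
      (mem_span3 _ c (by simp) (d-c) (b-c)
        (sub_mem_vectorSpan3 (by simp) (by simp))
        (sub_mem_vectorSpan3 (by simp) (by simp)) S1 V1 q1 hq1) hocb hodb ?_
    intro hmem
    have hsub : ({b,c,d} : Set E3) ⊆ ({a,b,c,d} : Set E3) := by
      intro z hz; simp at hz ⊢; tauto
    have hmem4 : q1 ∈ convexHull ℝ ({a,b,c,d} : Set E3) := convexHull_mono hsub hmem
    rw [← hrange4, B.convexHull_eq_nonneg_coord] at hmem4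
    have hnn := hmem4 1
    have hw4' : ∑ i, (![0, V1, 1-S1-V1, S1] : Fin 4 → ℝ) i = 1 := by
      rw [Fin.sum_univ_four]
      show 0 + V1 + (1-S1-V1) + S1 = 1
      ring
    have hq1comb : q1 = Finset.univ.affineCombination ℝ ![a,b,c,d] ![0, V1, 1-S1-V1, S1] := by
      rw [Finset.univ.affineCombination_eq_linear_combination _ _ hw4', Fin.sum_univ_four,
        hq1, vadd_eq_add]
      show _ = (0:ℝ) • a + V1 • b + (1-S1-V1) • c + S1 • d
      module
    rw [hq1comb, key _ hw4' 1] at hnn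
    simp at hnn
    linarith
  -- ### Face 3 : abc is unstable
  have hnot3 : ¬ StableOn p a b c := by
    set S3 : ℝ := wc + ε*s3 with hS3
    set V3 : ℝ := ε^2 + ε*t3 with hV3
    set q3 : E3 := (S3 • (c-b) + V3 • (a-b)) +ᵥ b with hq3
    have hpq3 : p - q3 = ε • ((d-b) - s3•(c-b) - t3•(a-b)) := by
      rw [hp, hq3, hS3, hV3, hwc, vadd_eq_add]; module
    have ho3u : ⟪p - q3, c-b⟫ = 0 := by
      rw [hpq3, real_inner_smul_left, hs3, ht3, hporth3.1, mul_zero]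
    have ho3v : ⟪p - q3, a-b⟫ = 0 := by
      rw [hpq3, real_inner_smul_left, hs3, ht3, hporth3.2, mul_zero]
    have hoba : ⟪p - q3, b-a⟫ = 0 := by
      rw [show b-a = -(a-b) from by abel, inner_neg_right, ho3v, neg_zero]
    have hoca : ⟪p - q3, c-a⟫ = 0 := by
      rw [show c-a = (c-b) - (a-b) from by abel, inner_sub_right, ho3u, ho3v, sub_zero]
    have hV3neg : V3 < 0 := by rw [hV3]; exact eps3 hε0 hεt3
    refine not_stableOn p q3 a b c
      (mem_span3 _ b (by simp) (c-b) (a-b)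
        (sub_mem_vectorSpan3 (by simp) (by simp))
        (sub_mem_vectorSpan3 (by simp) (by simp)) S3 V3 q3 hq3) hoba hoca ?_
    intro hmem
    have hsub : ({a,b,c} : Set E3) ⊆ ({a,b,c,d} : Set E3) := by
      intro z hz; simp at hz ⊢; tauto
    have hmem4 : q3 ∈ convexHull ℝ ({a,b,c,d} : Set E3) := convexHull_mono hsub hmem
    rw [← hrange4, B.convexHull_eq_nonneg_coord] at hmem4
    have hnn := hmem4 0
    have hw4' : ∑ i, (![V3, 1-S3-V3, S3, 0] : Fin 4 → ℝ) i = 1 := by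
      rw [Fin.sum_univ_four]
      show V3 + (1-S3-V3) + S3 + 0 = 1
      ring
    have hq3comb : q3 = Finset.univ.affineCombination ℝ ![a,b,c,d] ![V3, 1-S3-V3, S3, 0] := by
      rw [Finset.univ.affineCombination_eq_linear_combination _ _ hw4', Fin.sum_univ_four,
        hq3, vadd_eq_add]
      show _ = V3 • a + (1-S3-V3) • b + S3 • c + (0:ℝ) • d
      module
    rw [hq3comb, key _ hw4' 0] at hnn
    simp at hnn
    linarith
  -- ### Face 1 : acd is stable
  have hstab : StableOn p a c d := by
    obtain ⟨hx, hy, hxy⟩ := eps_main (c1 := b1) (c2 := b2) hε0 hεhalf hεM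
    set x : ℝ := wc + ε^3*b1 with hxdef
    set y : ℝ := ε + ε^3*b2 with hydef
    set qS : E3 := (x • (c-a) + y • (d-a)) +ᵥ a with hqS
    have hpqS : p - qS = ε^3 • ((b-a) - b1•(c-a) - b2•(d-a)) := by
      rw [hp, hqS, hxdef, hydef, hwc, vadd_eq_add]; module
    have hoSu : ⟪p - qS, c-a⟫ = 0 := by
      rw [hpqS, real_inner_smul_left, hb1, hb2, hporthS.1, mul_zero]
    have hoSv : ⟪p - qS, d-a⟫ = 0 := by
      rw [hpqS, real_inner_smul_left, hb1, hb2, hporthS.2, mul_zero]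
    refine stableOn_of p a c d h_acd ?_ ?_ ?_ qS hqS hoSu hoSv
    · rw [hxdef, hwc]; exact hx
    · rw [hydef]; exact hy
    · rw [hxdef, hydef, hwc]; linarith
  -- assemble
  refine ⟨p, hpint, 1, hstab, ?_⟩
  intro j hj
  fin_cases j
  · exact absurd hj hnot0
  · rfl
  · exact absurd hj hnot2
  · exact absurd hj hnot3
end
end

section
/- Let a, b, c, d be the vertices of a tetrahedron whose edges ab, bc and cd are all obtuse, and let A, B, C, D denote the faces opposite a, b, c, d respectively (so that C and D share edge ab, D and A share edge bc, and A and B share edge cd). Then for each face S among A, B, C, D there exists a point p in the interior of the tetrahedron such that the tetrahedron with load p is stable on S and on no other face, and each face other than S tips over the shared edge onto the next face along the chain C–D–A–B in the direction of S; in particular all four falling patterns C→D→A→B, C→D→A←B, C→D←A←B, and C←D←A←B are realizable by appropriate choice of the load point. -/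
open RealInnerProductSpace

noncomputable section

/-- The four falling patterns along the face chain `C–D–A–B` of the tetrahedron
`abcd`, where `A = bcd`, `B = acd`, `C = abd`, `D = abc` are the faces opposite
`a, b, c, d` (so `C, D` share edge `ab`, `D, A` share `bc`, and `A, B` share `cd`).
The pattern with index `k` has the `k`-th face of the chain `C, D, A, B` as its
unique stable (sink) face, and every other face tips over the shared edge onto
the next face along the chain in the direction of the sink:
`0 ↦ C←D←A←B`, `1 ↦ C→D←A←B`, `2 ↦ C→D→A←B`, `3 ↦ C→D→A→B`. -/
def FallingPattern (a b c d p : E3) : Fin 4 → Prop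
  | 0 => -- sink C : C←D←A←B
      StableOn p a b d ∧ ¬ StableOn p a b c ∧ ¬ StableOn p b c d ∧ ¬ StableOn p a c d ∧
      TipsOver p c a b ∧ TipsOver p d b c ∧ TipsOver p a c d
  | 1 => -- sink D : C→D←A←B
      StableOn p a b c ∧ ¬ StableOn p a b d ∧ ¬ StableOn p b c d ∧ ¬ StableOn p a c d ∧
      TipsOver p d a b ∧ TipsOver p d b c ∧ TipsOver p a c d
  | 2 => -- sink A : C→D→A←B
      StableOn p b c d ∧ ¬ StableOn p a b d ∧ ¬ StableOn p a b c ∧ ¬ StableOn p a c d ∧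
      TipsOver p d a b ∧ TipsOver p a b c ∧ TipsOver p a c d
  | 3 => -- sink B : C→D→A→B
      StableOn p a c d ∧ ¬ StableOn p a b d ∧ ¬ StableOn p a b c ∧ ¬ StableOn p b c d ∧
      TipsOver p d a b ∧ TipsOver p a b c ∧ TipsOver p b c d

namespace TetHelp

lemma inner_self_pos' {x : E3} (hx : x ≠ 0) : 0 < ⟪x, x⟫ :=
  lt_of_le_of_ne real_inner_self_nonneg (Ne.symm (inner_self_ne_zero.2 hx))

/-- Gram–Schmidt style in-plane normal: component of `S - P` orthogonal to `Q - P`. -/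
noncomputable def wv (P Q S : E3) : E3 :=
  (S - P) - (⟪S - P, Q - P⟫ / ⟪Q - P, Q - P⟫) • (Q - P)

lemma inner_edge_wv (P Q S : E3) : ⟪Q - P, wv P Q S⟫ = 0 := by
  by_cases h : Q - P = 0
  · simp [wv, h]
  · have h2 : ⟪Q - P, Q - P⟫ ≠ 0 := inner_self_ne_zero.2 h
    set u := Q - P with hu
    set v := S - P with hv
    show ⟪u, v - (⟪v, u⟫ / ⟪u, u⟫) • u⟫ = 0
    rw [inner_sub_right, real_inner_smul_right, div_mul_cancel₀ _ h2, real_inner_comm, sub_self]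

lemma inner_sub_wv (P Q S X : E3) : ⟪X - P, wv P Q S⟫ = ⟪wv P Q X, wv P Q S⟫ := by
  set W := wv P Q S with hW
  have hedge : ⟪Q - P, W⟫ = 0 := inner_edge_wv P Q S
  show ⟪X - P, W⟫ = ⟪(X - P) - (⟪X - P, Q - P⟫ / ⟪Q - P, Q - P⟫) • (Q - P), W⟫
  conv_rhs => rw [inner_sub_left, real_inner_smul_left]
  rw [hedge, mul_zero, sub_zero]

lemma inner_self_wv (P Q S : E3) : ⟪S - P, wv P Q S⟫ = ⟪wv P Q S, wv P Q S⟫ :=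
  inner_sub_wv P Q S S

lemma wv_ne_zero {S P Q : E3} (h : AffineIndependent ℝ ![S, P, Q]) : wv P Q S ≠ 0 := by
  intro h0
  rw [affineIndependent_iff_not_collinear_set] at h
  apply h
  apply (collinear_iff_of_mem (show P ∈ ({S, P, Q} : Set E3) by simp)).2
  refine ⟨Q - P, ?_⟩
  intro x hx
  rcases hx with rfl | rfl | rfl
  · refine ⟨⟪x - P, Q - P⟫ / ⟪Q - P, Q - P⟫, ?_⟩
    rw [wv] at h0
    have h1 : x - P = (⟪x - P, Q - P⟫ / ⟪Q - P, Q - P⟫) • (Q - P) := by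
      have h2 := sub_eq_zero.1 h0
      exact h2
    rw [vadd_eq_add]
    linear_combination (norm := module) h1
  · exact ⟨0, by simp⟩
  · exact ⟨1, by simp⟩

lemma ne_of_indep {S P Q : E3} (h : AffineIndependent ℝ ![S, P, Q]) : Q ≠ P := by
  intro e
  have := h.injective (show ![S,P,Q] 2 = ![S,P,Q] 1 by simpa using e)
  exact absurd this (by decide)

end TetHelp
namespace TetHelp

open AffineSubspace EuclideanGeometry

lemma direction_triple (S P Q : E3) :
    (affineSpan ℝ ({S, P, Q} : Set E3)).direction
      = Submodule.span ℝ {wv P Q S, Q - P} := by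
  rw [direction_affineSpan]
  have himg : (fun x => x -ᵥ P) '' ({S, P, Q} : Set E3) = {S - P, 0, Q - P} := by
    simp [Set.image_insert_eq, vsub_eq_sub]
  rw [vectorSpan_eq_span_vsub_set_right ℝ (show P ∈ ({S, P, Q} : Set E3) by simp), himg]
  apply le_antisymm
  · rw [Submodule.span_le]
    intro x hx
    simp only [Set.mem_insert_iff, Set.mem_singleton_iff] at hx
    rcases hx with rfl | rfl | rfl
    · have hd : S - P = wv P Q S + (⟪S - P, Q - P⟫ / ⟪Q - P, Q - P⟫) • (Q - P) := by
        rw [wv]; module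
      rw [SetLike.mem_coe, hd]
      exact Submodule.add_mem _ (Submodule.subset_span (by simp))
        (Submodule.smul_mem _ _ (Submodule.subset_span (by simp)))
    · exact Submodule.zero_mem _
    · exact Submodule.subset_span (by simp)
  · rw [Submodule.span_le]
    intro x hx
    simp only [Set.mem_insert_iff, Set.mem_singleton_iff] at hx
    rcases hx with rfl | rfl
    · have hd : wv P Q S = (S - P) - (⟪S - P, Q - P⟫ / ⟪Q - P, Q - P⟫) • (Q - P) := rfl
      rw [SetLike.mem_coe, hd]
      exact Submodule.sub_mem _ (Submodule.subset_span (by simp))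
        (Submodule.smul_mem _ _ (Submodule.subset_span (by simp)))
    · exact Submodule.subset_span (by simp)

lemma direction_pair (P Q : E3) :
    (affineSpan ℝ ({P, Q} : Set E3)).direction = Submodule.span ℝ {Q - P} := by
  rw [direction_affineSpan, vectorSpan_pair_rev]
  simp [vsub_eq_sub]

lemma inner_zero_of_mem_line {P Q x : E3} {W : E3} (hW : ⟪Q - P, W⟫ = 0)
    (hx : x ∈ affineSpan ℝ ({P, Q} : Set E3)) : ⟪x - P, W⟫ = 0 := by
  have hP : P ∈ affineSpan ℝ ({P, Q} : Set E3) := subset_affineSpan ℝ _ (by simp)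
  have hd : x - P ∈ (affineSpan ℝ ({P, Q} : Set E3)).direction := by
    simpa [vsub_eq_sub] using AffineSubspace.vsub_mem_direction hx hP
  rw [direction_pair] at hd
  obtain ⟨r, hr⟩ := Submodule.mem_span_singleton.1 hd
  rw [← hr, real_inner_smul_left, hW, mul_zero]

end TetHelp
namespace TetHelp

open AffineSubspace EuclideanGeometry

lemma tipsOver_of_inner_neg {p S P Q : E3} (h3 : AffineIndependent ℝ ![S, P, Q])
    (hneg : ⟪p - P, wv P Q S⟫ < 0) : TipsOver p S P Q := by
  set W := wv P Q S with hW
  have hW0 : W ≠ 0 := wv_ne_zero h3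
  set s : AffineSubspace ℝ E3 := affineSpan ℝ ({S, P, Q} : Set E3) with hs
  have hSs : S ∈ s := subset_affineSpan ℝ _ (by simp)
  have hPs : P ∈ s := subset_affineSpan ℝ _ (by simp)
  haveI : Nonempty s := ⟨⟨S, hSs⟩⟩
  set q : E3 := ↑(orthogonalProjection s p) with hq
  have hqs : q ∈ s := orthogonalProjection_mem p
  have horth : ∀ v ∈ s.direction, ⟪p - q, v⟫ = 0 := by
    intro v hv
    have h1 := vsub_orthogonalProjection_mem_direction_orthogonal s p
    rw [Submodule.mem_orthogonal] at h1
    have := h1 v hv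
    rwa [real_inner_comm, vsub_eq_sub] at this
  have hWdir : W ∈ s.direction := by
    rw [hs, direction_triple]
    exact Submodule.subset_span (by simp [hW])
  have hqW : ⟪q - P, W⟫ < 0 := by
    have h1 : ⟪p - q, W⟫ = 0 := horth W hWdir
    have h2 : ⟪q - P, W⟫ = ⟪p - P, W⟫ - ⟪p - q, W⟫ := by
      rw [← inner_sub_left]
      congr 1
      abel
    rw [h2, h1, sub_zero]
    exact hneg
  -- the line
  set L : AffineSubspace ℝ E3 := affineSpan ℝ ({P, Q} : Set E3) with hL
  have hedge : ⟪Q - P, W⟫ = 0 := inner_edge_wv P Q S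
  have hSW : 0 < ⟪S - P, W⟫ := by
    rw [hW, inner_self_wv]
    exact inner_self_pos' hW0
  have hqL : q ∉ L := fun hmem =>
    absurd (inner_zero_of_mem_line hedge hmem) (ne_of_lt hqW)
  have hSL : S ∉ L := fun hmem =>
    absurd (inner_zero_of_mem_line hedge hmem) (ne_of_gt hSW)
  -- the in-between point
  set yq : ℝ := ⟪q - P, W⟫ with hyq
  set yS : ℝ := ⟪S - P, W⟫ with hyS
  have hden : yq - yS < 0 := by linarith
  set θ : ℝ := yq / (yq - yS) with hθ
  have hθ0 : 0 < θ := div_pos_of_neg_of_neg hqW hden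
  have hθ1 : θ < 1 := by
    have hdne : yq - yS ≠ 0 := hden.ne
    have h3 : 1 - θ = (-yS)/(yq - yS) := by
      rw [hθ]
      field_simp
      ring
    have h2 : 0 < (-yS)/(yq - yS) := div_pos_of_neg_of_neg (by linarith) hden
    linarith
  set m : E3 := q + θ • (S - q) with hm
  have hmW : ⟪m - P, W⟫ = 0 := by
    have e1 : m - P = (1 - θ) • (q - P) + θ • (S - P) := by rw [hm]; module
    have hdne : yq - yS ≠ 0 := hden.ne
    rw [e1, inner_add_left, real_inner_smul_left, real_inner_smul_left, ← hyq, ← hyS, hθ]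
    field_simp
    ring
  have hmL : m ∈ L := by
    -- m - P lies in span {W, Q - P} and is orthogonal to W
    have hqd : q - P ∈ Submodule.span ℝ {W, Q - P} := by
      rw [← direction_triple, ← hs]
      simpa [vsub_eq_sub] using AffineSubspace.vsub_mem_direction hqs hPs
    have hSd : S - P ∈ Submodule.span ℝ {W, Q - P} := by
      rw [← direction_triple, ← hs]
      simpa [vsub_eq_sub] using AffineSubspace.vsub_mem_direction hSs hPs
    have hmd : m - P ∈ Submodule.span ℝ {W, Q - P} := by
      have e1 : m - P = (1 - θ) • (q - P) + θ • (S - P) := by rw [hm]; module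
      rw [e1]
      exact Submodule.add_mem _ (Submodule.smul_mem _ _ hqd) (Submodule.smul_mem _ _ hSd)
    obtain ⟨α, β, hab⟩ := Submodule.mem_span_pair.1 hmd
    have hα : α = 0 := by
      have := congrArg (fun v => ⟪v, W⟫) hab
      simp only [inner_add_left, real_inner_smul_left] at this
      rw [hedge, hmW] at this
      have hWW : 0 < ⟪W, W⟫ := inner_self_pos' hW0
      have : α * ⟪W, W⟫ = 0 := by linarith
      rcases mul_eq_zero.1 this with h | h
      · exact h
      · exact absurd h (ne_of_gt hWW)
    have hmdir : m - P ∈ L.direction := by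
      rw [hL, direction_pair, Submodule.mem_span_singleton]
      exact ⟨β, by rw [← hab, hα]; module⟩
    have hPL : P ∈ L := subset_affineSpan ℝ _ (by simp)
    have := AffineSubspace.vadd_mem_of_mem_direction hmdir hPL
    simpa [vadd_eq_add, sub_add_cancel] using this
  -- SOppSide
  refine ⟨q, hqs, horth, ⟨⟨m, hmL, m, hmL, ?_⟩, hqL, hSL⟩⟩
  have e1 : q -ᵥ m = θ • (q - S) := by rw [hm, vsub_eq_sub]; module
  have e2 : m -ᵥ S = (1 - θ) • (q - S) := by rw [hm, vsub_eq_sub]; module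
  rw [e1, e2]
  exact (SameRay.refl (q - S)).nonneg_smul_left hθ0.le |>.nonneg_smul_right (by linarith)

end TetHelp
namespace TetHelp

open AffineSubspace EuclideanGeometry

lemma stableOn_congr {p v₁ v₂ v₃ w₁ w₂ w₃ : E3}
    (h : ({v₁, v₂, v₃} : Set E3) = {w₁, w₂, w₃}) :
    StableOn p v₁ v₂ v₃ ↔ StableOn p w₁ w₂ w₃ := by
  unfold StableOn
  rw [h]

lemma not_stableOn_of_tipsOver {p x₁ x₂ x₃ : E3}
    (h3 : AffineIndependent ℝ ![x₁, x₂, x₃])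
    (ht : TipsOver p x₁ x₂ x₃) : ¬ StableOn p x₁ x₂ x₃ := by
  rintro ⟨q, hq, horthq⟩
  obtain ⟨q', hq's, horthq', hopp⟩ := ht
  have hsub : convexHull ℝ ({x₁, x₂, x₃} : Set E3) ⊆
      (affineSpan ℝ ({x₁, x₂, x₃} : Set E3) : Set E3) :=
    convexHull_min (subset_affineSpan ℝ _) (AffineSubspace.convex _)
  have hqhull : q ∈ convexHull ℝ ({x₁, x₂, x₃} : Set E3) := intrinsicInterior_subset hq
  have hqspan : q ∈ affineSpan ℝ ({x₁, x₂, x₃} : Set E3) := hsub hqhull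
  -- uniqueness of the orthogonal projection point
  have hqq' : q = q' := by
    have hd : q - q' ∈ (affineSpan ℝ ({x₁, x₂, x₃} : Set E3)).direction := by
      simpa [vsub_eq_sub] using AffineSubspace.vsub_mem_direction hqspan hq's
    have h1 := horthq _ hd
    have h2 := horthq' _ hd
    have h3' : ⟪q - q', q - q'⟫ = 0 := by
      have e : (p - q') - (p - q) = q - q' := by abel
      have e2 := inner_sub_left (𝕜 := ℝ) (p - q') (p - q) (q - q')
      rw [e, h1, h2, sub_zero] at e2
      exact e2
    have := inner_self_eq_zero.1 h3'
    exact sub_eq_zero.1 this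
  subst hqq'
  -- the separating functional
  set W := wv x₂ x₃ x₁ with hW
  have hW0 : W ≠ 0 := wv_ne_zero h3
  have hedge : ⟪x₃ - x₂, W⟫ = 0 := inner_edge_wv x₂ x₃ x₁
  have hx₁W : 0 < ⟪x₁ - x₂, W⟫ := by
    rw [hW, inner_self_wv]
    exact inner_self_pos' hW0
  -- nonnegative on the hull
  have hhull : ∀ x ∈ convexHull ℝ ({x₁, x₂, x₃} : Set E3), 0 ≤ ⟪x - x₂, W⟫ := by
    intro x hx
    have hlin : IsLinearMap ℝ (fun y : E3 => ⟪y, W⟫) :=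
      ⟨fun u v => inner_add_left u v W, fun c u => real_inner_smul_left u W c⟩
    have hconv : Convex ℝ {y : E3 | ⟪x₂, W⟫ ≤ ⟪y, W⟫} := convex_halfSpace_ge hlin _
    have : convexHull ℝ ({x₁, x₂, x₃} : Set E3) ⊆ {y : E3 | ⟪x₂, W⟫ ≤ ⟪y, W⟫} := by
      apply convexHull_min _ hconv
      intro y hy
      rcases hy with rfl | rfl | rfl
      · have := hx₁W
        rw [inner_sub_left] at this
        simp only [Set.mem_setOf_eq]
        linarith
      · simp
      · have := hedge
        rw [inner_sub_left] at this
        simp only [Set.mem_setOf_eq]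
        linarith
    have := this hx
    simp only [Set.mem_setOf_eq] at this
    rw [inner_sub_left]
    linarith
  -- strictly negative at q
  obtain ⟨⟨m₁, hm₁, m₂, hm₂, hray⟩, hqL, hx₁L⟩ := hopp
  have hq1 : q -ᵥ m₁ ≠ 0 := by
    rw [vsub_eq_sub, sub_ne_zero]
    rintro rfl
    exact hqL hm₁
  have hx1 : m₂ -ᵥ x₁ ≠ 0 := by
    rw [vsub_eq_sub, sub_ne_zero]
    rintro rfl
    exact hx₁L hm₂
  obtain ⟨r₁, r₂, hr₁, hr₂, hre⟩ := hray.exists_pos hq1 hx1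
  rw [vsub_eq_sub, vsub_eq_sub] at hre
  have hkey := congrArg (fun v => ⟪v, W⟫) hre
  simp only [real_inner_smul_left] at hkey
  have em₁ : ⟪q - m₁, W⟫ = ⟪q - x₂, W⟫ - ⟪m₁ - x₂, W⟫ := by
    rw [← inner_sub_left]
    congr 1
    abel
  have em₂ : ⟪m₂ - x₁, W⟫ = ⟪m₂ - x₂, W⟫ - ⟪x₁ - x₂, W⟫ := by
    rw [← inner_sub_left]
    congr 1
    abel
  have hm₁0 : ⟪m₁ - x₂, W⟫ = 0 := inner_zero_of_mem_line hedge hm₁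
  have hm₂0 : ⟪m₂ - x₂, W⟫ = 0 := inner_zero_of_mem_line hedge hm₂
  have hqneg : ⟪q - x₂, W⟫ < 0 := by
    rw [em₁, em₂, hm₁0, hm₂0] at hkey
    have : r₁ * ⟪q - x₂, W⟫ = r₂ * (0 - ⟪x₁ - x₂, W⟫) := by linarith [hkey]
    nlinarith
  exact absurd (hhull q hqhull) (not_le.2 hqneg)

end TetHelp
namespace TetHelp

open AffineSubspace EuclideanGeometry

lemma affine_zero_on_span {f : E3 →ᵃ[ℝ] ℝ} {s : Set E3} (h : ∀ x ∈ s, f x = 0) :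
    ∀ x ∈ affineSpan ℝ s, f x = 0 := by
  intro x hx
  refine affineSpan_induction (p := fun y => f y = 0) hx h ?_
  intro c u v w hu hv hw
  rw [AffineMap.map_vadd, f.linear.map_smul, f.linearMap_vsub]
  simp only [vsub_eq_sub, vadd_eq_add, smul_eq_mul, hu, hv, hw]
  ring

lemma combo_mem_hull {x₁ x₂ x₃ : E3} {w₁ w₂ w₃ : ℝ} (h1 : 0 ≤ w₁) (h2 : 0 ≤ w₂)
    (h3 : 0 ≤ w₃) (hs : w₁ + w₂ + w₃ = 1) :
    w₁ • x₁ + w₂ • x₂ + w₃ • x₃ ∈ convexHull ℝ ({x₁, x₂, x₃} : Set E3) := by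
  have hmem := Finset.centerMass_mem_convexHull (t := (Finset.univ : Finset (Fin 3)))
    (w := ![w₁, w₂, w₃]) (z := ![x₁, x₂, x₃]) (s := ({x₁, x₂, x₃} : Set E3))
    (fun i _ => by fin_cases i <;> simpa) (by simp [Fin.sum_univ_three, hs])
    (fun i _ => by fin_cases i <;> simp)
  have he : (Finset.univ : Finset (Fin 3)).centerMass ![w₁, w₂, w₃] ![x₁, x₂, x₃]
      = w₁ • x₁ + w₂ • x₂ + w₃ • x₃ := by
    rw [Finset.centerMass]
    simp [Fin.sum_univ_three, hs]
  rwa [he] at hmem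

lemma inner_combo3 {w₀ w₁ w₂ : ℝ} (h : w₀ + w₁ + w₂ = 1) (x₀ x₁ x₂ P ω : E3) :
    ⟪(w₀ • x₀ + w₁ • x₁ + w₂ • x₂) - P, ω⟫
      = w₀ * ⟪x₀ - P, ω⟫ + w₁ * ⟪x₁ - P, ω⟫ + w₂ * ⟪x₂ - P, ω⟫ := by
  have hP : (w₀ • x₀ + w₁ • x₁ + w₂ • x₂) - P
      = w₀ • (x₀ - P) + w₁ • (x₁ - P) + w₂ • (x₂ - P) := by
    have h1 : P = (w₀ + w₁ + w₂) • P := by rw [h, one_smul]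
    nth_rewrite 1 [h1]
    module
  rw [hP, inner_add_left, inner_add_left, real_inner_smul_left, real_inner_smul_left,
    real_inner_smul_left]

lemma stable_exists_open (T : AffineBasis (Fin 4) ℝ E3) (i₀ i₁ i₂ l : Fin 4)
    (h0 : i₀ ≠ l) (h1 : i₁ ≠ l) (h2 : i₂ ≠ l)
    (h01 : i₀ ≠ i₁) (h02 : i₀ ≠ i₂) (h12 : i₁ ≠ i₂) :
    ∃ U : Set E3, IsOpen U ∧ (∀ p ∈ U, StableOn p (T i₀) (T i₁) (T i₂)) ∧
      ∀ w : Fin 3 → ℝ, (∀ i, 0 < w i) → (w 0 + w 1 + w 2 = 1) →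
        (w 0 • T i₀ + w 1 • T i₁ + w 2 • T i₂) ∈ U := by
  classical
  set SS : Set E3 := {T i₀, T i₁, T i₂} with hSS
  set N : AffineSubspace ℝ E3 := affineSpan ℝ (convexHull ℝ SS) with hN
  have hNS : N = affineSpan ℝ SS := affineSpan_convexHull SS
  have hTN : ∀ j, j = i₀ ∨ j = i₁ ∨ j = i₂ → T j ∈ N := by
    rintro j (rfl | rfl | rfl) <;>
      exact subset_affineSpan ℝ _ (subset_convexHull ℝ _ (by simp [hSS]))
  haveI : Nonempty ↥N := ⟨⟨T i₀, hTN i₀ (Or.inl rfl)⟩⟩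
  -- the l-th coordinate vanishes on N
  have hvanish : ∀ x ∈ N, T.coord l x = 0 := by
    intro x hx
    rw [hNS] at hx
    refine affine_zero_on_span (f := T.coord l) ?_ x hx
    intro y hy
    rcases hy with rfl | rfl | rfl <;>
      · rw [AffineBasis.coord_apply]
        simp [Ne.symm h0, Ne.symm h1, Ne.symm h2]
  -- decomposition of points of N as combinations of the three face vertices
  have hins0 : i₀ ∉ ({i₁, i₂, l} : Finset (Fin 4)) := by simp [h01, h02, h0]
  have hins1 : i₁ ∉ ({i₂, l} : Finset (Fin 4)) := by simp [h12, h1]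
  have hins2 : i₂ ∉ ({l} : Finset (Fin 4)) := by simp [h2]
  have huniv : ({i₀, i₁, i₂, l} : Finset (Fin 4)) = Finset.univ := by
    apply Finset.eq_univ_of_card
    rw [Finset.card_insert_of_notMem hins0, Finset.card_insert_of_notMem hins1,
      Finset.card_insert_of_notMem hins2]
    simp
  have hdecomp : ∀ x ∈ N, x = T.coord i₀ x • T i₀ + T.coord i₁ x • T i₁
      + T.coord i₂ x • T i₂ := by
    intro x hx
    have hc := T.affineCombination_coord_eq_self x
    rw [Finset.univ.affineCombination_eq_linear_combination _ _
      (T.sum_coord_apply_eq_one x), ← huniv] at hc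
    rw [Finset.sum_insert hins0, Finset.sum_insert hins1, Finset.sum_insert hins2,
      Finset.sum_singleton, hvanish x hx, zero_smul, add_zero] at hc
    rw [← add_assoc] at hc
    exact hc.symm
  have hsumface : ∀ x ∈ N, T.coord i₀ x + T.coord i₁ x + T.coord i₂ x = 1 := by
    intro x hx
    have hc := T.sum_coord_apply_eq_one x
    rw [← huniv, Finset.sum_insert hins0, Finset.sum_insert hins1, Finset.sum_insert hins2,
      Finset.sum_singleton, hvanish x hx, add_zero] at hc
    linarith
  set proj : E3 →ᴬ[ℝ] ↥N := orthogonalProjection N with hproj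
  have hcont : ∀ j : Fin 4, Continuous fun p : E3 => T.coord j ((proj p : E3)) := by
    intro j
    exact ((T.coord j).comp (N.subtype.comp proj.toAffineMap)).continuous_of_finiteDimensional
  set U : Set E3 := {p | 0 < T.coord i₀ ((proj p : E3)) ∧ 0 < T.coord i₁ ((proj p : E3))
      ∧ 0 < T.coord i₂ ((proj p : E3))} with hU
  refine ⟨U, ?_, ?_, ?_⟩
  · have : U = {p : E3 | 0 < T.coord i₀ ((proj p : E3))}
        ∩ ({p : E3 | 0 < T.coord i₁ ((proj p : E3))}
        ∩ {p : E3 | 0 < T.coord i₂ ((proj p : E3))}) := by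
      ext p; simp [hU, and_assoc]
    rw [this]
    exact ((isOpen_lt continuous_const (hcont i₀)).inter
      ((isOpen_lt continuous_const (hcont i₁)).inter (isOpen_lt continuous_const (hcont i₂))))
  · intro p hp
    obtain ⟨hp0, hp1, hp2⟩ := hp
    refine ⟨↑(proj p), ?_, ?_⟩
    · -- intrinsic interior membership
      set V : Set ↥N := {z : ↥N | 0 < T.coord i₀ (z : E3) ∧ 0 < T.coord i₁ (z : E3)
          ∧ 0 < T.coord i₂ (z : E3)} with hV
      have hVopen : IsOpen V := by
        have hc : ∀ j : Fin 4, Continuous fun z : ↥N => T.coord j (z : E3) := fun j =>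
          ((T.coord j).comp N.subtype).continuous_of_finiteDimensional
        have : V = {z : ↥N | 0 < T.coord i₀ (z : E3)}
            ∩ ({z : ↥N | 0 < T.coord i₁ (z : E3)} ∩ {z : ↥N | 0 < T.coord i₂ (z : E3)}) := by
          ext z; simp [hV, and_assoc]
        rw [this]
        exact ((isOpen_lt continuous_const (hc i₀)).inter
          ((isOpen_lt continuous_const (hc i₁)).inter (isOpen_lt continuous_const (hc i₂))))
      have hVsub : V ⊆ ((↑) : ↥N → E3) ⁻¹' (convexHull ℝ SS) := by
        rintro z ⟨hz0, hz1, hz2⟩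
        rw [Set.mem_preimage]
        have hd := hdecomp (z : E3) z.2
        have hs := hsumface (z : E3) z.2
        rw [hd]
        exact combo_mem_hull hz0.le hz1.le hz2.le hs
      exact ⟨proj p, interior_maximal hVsub hVopen ⟨hp0, hp1, hp2⟩, rfl⟩
    · intro w hw
      have hvs := vsub_orthogonalProjection_mem_direction_orthogonal N p
      rw [Submodule.mem_orthogonal] at hvs
      have hw' : w ∈ N.direction := by rw [hNS]; exact hw
      have h2' := hvs w hw'
      rwa [real_inner_comm, vsub_eq_sub] at h2'
  · intro w hw hsum
    set q₀ : E3 := w 0 • T i₀ + w 1 • T i₁ + w 2 • T i₂ with hq₀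
    have hq₀hull : q₀ ∈ convexHull ℝ SS :=
      combo_mem_hull (hw 0).le (hw 1).le (hw 2).le hsum
    have hq₀N : q₀ ∈ N := subset_affineSpan ℝ _ hq₀hull
    have hprojq : ((proj q₀ : E3)) = q₀ := orthogonalProjection_eq_self_iff.2 hq₀N
    -- coordinates of q₀
    have hsum3 : (Finset.univ : Finset (Fin 3)).sum w = 1 := by
      rw [Fin.sum_univ_three]; exact hsum
    set e : Fin 3 → Fin 4 := ![i₀, i₁, i₂] with he
    have hcomb : q₀ = Finset.univ.affineCombination ℝ (T ∘ e) w := by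
      rw [Finset.univ.affineCombination_eq_linear_combination _ _ hsum3, Fin.sum_univ_three]
      simp [he, hq₀]
    have hcoord : ∀ j : Fin 4, T.coord j q₀
        = w 0 * T.coord j (T i₀) + w 1 * T.coord j (T i₁) + w 2 * T.coord j (T i₂) := by
      intro j
      rw [hcomb, Finset.univ.map_affineCombination (T ∘ e) w hsum3 (T.coord j),
        Finset.univ.affineCombination_eq_linear_combination _ _ hsum3, Fin.sum_univ_three]
      simp [he, smul_eq_mul]
    have hc0 : T.coord i₀ q₀ = w 0 := by
      rw [hcoord i₀, AffineBasis.coord_apply, AffineBasis.coord_apply, AffineBasis.coord_apply]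
      simp [h01, h02]
    have hc1 : T.coord i₁ q₀ = w 1 := by
      rw [hcoord i₁, AffineBasis.coord_apply, AffineBasis.coord_apply, AffineBasis.coord_apply]
      simp [Ne.symm h01, h12]
    have hc2 : T.coord i₂ q₀ = w 2 := by
      rw [hcoord i₂, AffineBasis.coord_apply, AffineBasis.coord_apply, AffineBasis.coord_apply]
      simp [Ne.symm h02, Ne.symm h12]
    refine ⟨?_, ?_, ?_⟩ <;> rw [hprojq]
    · rw [hc0]; exact hw 0
    · rw [hc1]; exact hw 1
    · rw [hc2]; exact hw 2

end TetHelp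
namespace TetHelp

open AffineSubspace EuclideanGeometry Filter Topology

lemma glue (T : AffineBasis (Fin 4) ℝ E3) (i₀ i₁ i₂ l : Fin 4)
    (h0 : i₀ ≠ l) (h1 : i₁ ≠ l) (h2 : i₂ ≠ l)
    (h01 : i₀ ≠ i₁) (h02 : i₀ ≠ i₂) (h12 : i₁ ≠ i₂)
    (P₁ P₂ P₃ ω₁ ω₂ ω₃ : E3)
    (hq : ∃ w : Fin 3 → ℝ, (∀ i, 0 < w i) ∧ (w 0 + w 1 + w 2 = 1) ∧
       ⟪(w 0 • T i₀ + w 1 • T i₁ + w 2 • T i₂) - P₁, ω₁⟫ < 0 ∧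
       ⟪(w 0 • T i₀ + w 1 • T i₁ + w 2 • T i₂) - P₂, ω₂⟫ < 0 ∧
       ⟪(w 0 • T i₀ + w 1 • T i₁ + w 2 • T i₂) - P₃, ω₃⟫ < 0) :
    ∃ p ∈ interior (convexHull ℝ (Set.range ⇑T)),
      StableOn p (T i₀) (T i₁) (T i₂) ∧
      ⟪p - P₁, ω₁⟫ < 0 ∧ ⟪p - P₂, ω₂⟫ < 0 ∧ ⟪p - P₃, ω₃⟫ < 0 := by
  obtain ⟨w, hw, hsum, hn1, hn2, hn3⟩ := hq
  obtain ⟨U, hUopen, hUstable, hUmem⟩ := stable_exists_open T i₀ i₁ i₂ l h0 h1 h2 h01 h02 h12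
  set q : E3 := w 0 • T i₀ + w 1 • T i₁ + w 2 • T i₂ with hqdef
  have hqU : q ∈ U := hUmem w hw hsum
  set g : E3 := Finset.univ.centroid ℝ ⇑T with hg
  have hgint : g ∈ interior (convexHull ℝ (Set.range ⇑T)) :=
    T.centroid_mem_interior_convexHull
  have hopen_inner : ∀ (P ω : E3), IsOpen {p : E3 | ⟪p - P, ω⟫ < 0} := by
    intro P ω
    exact isOpen_lt (Continuous.inner ((continuous_id.sub continuous_const))
      continuous_const) continuous_const
  set G : Set E3 := U ∩ ({p : E3 | ⟪p - P₁, ω₁⟫ < 0} ∩ ({p : E3 | ⟪p - P₂, ω₂⟫ < 0}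
      ∩ {p : E3 | ⟪p - P₃, ω₃⟫ < 0})) with hG
  have hGopen : IsOpen G := hUopen.inter ((hopen_inner P₁ ω₁).inter
    ((hopen_inner P₂ ω₂).inter (hopen_inner P₃ ω₃)))
  have hqG : q ∈ G := ⟨hqU, hn1, hn2, hn3⟩
  set f : ℝ → E3 := fun ε => q + ε • (g - q) with hf
  have hfc : Continuous f := by
    apply continuous_const.add
    exact continuous_id.smul continuous_const
  have hf0 : f 0 = q := by simp [hf]
  have hev1 : ∀ᶠ ε in 𝓝 (0:ℝ), f ε ∈ G :=
    hfc.continuousAt.eventually_mem (hGopen.mem_nhds (by rw [hf0]; exact hqG))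
  have hev1' : ∀ᶠ ε in 𝓝[>] (0:ℝ), f ε ∈ G := hev1.filter_mono nhdsWithin_le_nhds
  have hev2 : ∀ᶠ ε in 𝓝[>] (0:ℝ), ε ∈ Set.Ioc (0:ℝ) 1 :=
    Filter.eventually_of_mem (Ioc_mem_nhdsGT one_pos) fun _ hx => hx
  obtain ⟨ε, hεG, hεIoc⟩ := (hev1'.and hev2).exists
  have hqhull : q ∈ convexHull ℝ (Set.range ⇑T) := by
    have h1' : q ∈ convexHull ℝ ({T i₀, T i₁, T i₂} : Set E3) :=
      combo_mem_hull (hw 0).le (hw 1).le (hw 2).le hsum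
    refine convexHull_mono ?_ h1'
    rintro x (rfl | rfl | rfl) <;> exact Set.mem_range_self _
  have hpint : f ε ∈ interior (convexHull ℝ (Set.range ⇑T)) :=
    (convex_convexHull ℝ _).add_smul_sub_mem_interior hqhull hgint hεIoc
  obtain ⟨hU', hn1', hn2', hn3'⟩ := hεG
  exact ⟨f ε, hpint, hUstable _ hU', hn1', hn2', hn3'⟩

end TetHelp
namespace TetHelp

open AffineSubspace EuclideanGeometry Filter Topology

lemma range_vec4 {α : Type*} (v : Fin 4 → α) : Set.range v = {v 0, v 1, v 2, v 3} := by
  ext w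
  simp only [Set.mem_range, Set.mem_insert_iff, Set.mem_singleton_iff]
  constructor
  · rintro ⟨i, rfl⟩
    fin_cases i <;> simp
  · rintro (rfl | rfl | rfl | rfl)
    exacts [⟨0, rfl⟩, ⟨1, rfl⟩, ⟨2, rfl⟩, ⟨3, rfl⟩]

lemma indep3 {a b c d : E3} (h : AffineIndependent ℝ ![a, b, c, d]) (i j k : Fin 4)
    (hij : i ≠ j) (hik : i ≠ k) (hjk : j ≠ k) :
    AffineIndependent ℝ (![a, b, c, d] ∘ ![i, j, k]) := by
  apply h.comp_embedding ⟨![i, j, k], ?_⟩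
  intro x y hxy
  fin_cases x <;> fin_cases y <;> simp_all

lemma eventually_neg {f : ℝ → ℝ} (hf : Continuous f) (h0 : f 0 < 0) :
    ∀ᶠ t in 𝓝[>] (0:ℝ), f t < 0 :=
  (hf.continuousAt.eventually_lt continuousAt_const h0).filter_mono nhdsWithin_le_nhds

end TetHelp

set_option maxHeartbeats 3200000 in
open TetHelp AffineSubspace Filter Topology in
/-- **All four falling patterns are realizable**: if the edges `ab`, `bc`, `cd`
of the tetrahedron `abcd` are all obtuse, then for each face `S` along the chain
`C–D–A–B` there is a load point `p` in the interior of the tetrahedron realizing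
the falling pattern with sink `S`: the tetrahedron is stable on `S` and on no
other face, and every other face tips over the shared edge onto the next face of
the chain toward `S`.  In particular the patterns `C→D→A→B`, `C→D→A←B`,
`C→D←A←B` and `C←D←A←B` all occur. -/
theorem obtuse_path_realizes_all_falling_patterns (a b c d : E3)
    (h : AffineIndependent ℝ ![a, b, c, d])
    (hab : ObtuseEdge a b c d) (hbc : ObtuseEdge b c a d) (hcd : ObtuseEdge c d a b) :
    ∀ k : Fin 4, ∃ p ∈ interior (convexHull ℝ ({a, b, c, d} : Set E3)),
      FallingPattern a b c d p k := by
  have htop : affineSpan ℝ (Set.range ![a, b, c, d]) = ⊤ := by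
    rw [h.affineSpan_eq_top_iff_card_eq_finrank_add_one]
    simp [finrank_euclideanSpace_fin]
  set T : AffineBasis (Fin 4) ℝ E3 := ⟨![a, b, c, d], h, htop⟩ with hT
  have hrng : Set.range ⇑T = ({a, b, c, d} : Set E3) := by
    have h1 : ⇑T = ![a, b, c, d] := rfl
    rw [h1, range_vec4]
    simp
  -- independence of triples
  have iCAB : AffineIndependent ℝ ![c, a, b] := by
    have h1 := indep3 h 2 0 1 (by decide) (by decide) (by decide)
    have h2 : ![a,b,c,d] ∘ ![(2:Fin 4), 0, 1] = ![c, a, b] := by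
      funext x; fin_cases x <;> rfl
    rwa [h2] at h1
  have iDAB : AffineIndependent ℝ ![d, a, b] := by
    have h1 := indep3 h 3 0 1 (by decide) (by decide) (by decide)
    have h2 : ![a,b,c,d] ∘ ![(3:Fin 4), 0, 1] = ![d, a, b] := by
      funext x; fin_cases x <;> rfl
    rwa [h2] at h1
  have iABC : AffineIndependent ℝ ![a, b, c] := by
    have h1 := indep3 h 0 1 2 (by decide) (by decide) (by decide)
    have h2 : ![a,b,c,d] ∘ ![(0:Fin 4), 1, 2] = ![a, b, c] := by
      funext x; fin_cases x <;> rfl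
    rwa [h2] at h1
  have iDBC : AffineIndependent ℝ ![d, b, c] := by
    have h1 := indep3 h 3 1 2 (by decide) (by decide) (by decide)
    have h2 : ![a,b,c,d] ∘ ![(3:Fin 4), 1, 2] = ![d, b, c] := by
      funext x; fin_cases x <;> rfl
    rwa [h2] at h1
  have iACD : AffineIndependent ℝ ![a, c, d] := by
    have h1 := indep3 h 0 2 3 (by decide) (by decide) (by decide)
    have h2 : ![a,b,c,d] ∘ ![(0:Fin 4), 2, 3] = ![a, c, d] := by
      funext x; fin_cases x <;> rfl
    rwa [h2] at h1
  have iBCD : AffineIndependent ℝ ![b, c, d] := by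
    have h1 := indep3 h 1 2 3 (by decide) (by decide) (by decide)
    have h2 : ![a,b,c,d] ∘ ![(1:Fin 4), 2, 3] = ![b, c, d] := by
      funext x; fin_cases x <;> rfl
    rwa [h2] at h1
  -- the obtuseness constants
  have hKab : ⟪wv a b c, wv a b d⟫ < 0 := hab
  have hKab' : ⟪wv a b d, wv a b c⟫ < 0 := by rwa [real_inner_comm] at hKab
  have hKbc : ⟪wv b c a, wv b c d⟫ < 0 := hbc
  have hKbc' : ⟪wv b c d, wv b c a⟫ < 0 := by rwa [real_inner_comm] at hKbc
  have hKcd : ⟪wv c d a, wv c d b⟫ < 0 := hcd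
  have hKcd' : ⟪wv c d b, wv c d a⟫ < 0 := by rwa [real_inner_comm] at hKcd
  have hNabd : 0 < ⟪wv a b d, wv a b d⟫ := inner_self_pos' (wv_ne_zero iDAB)
  have hNbca : 0 < ⟪wv b c a, wv b c a⟫ := inner_self_pos' (wv_ne_zero iABC)
  have hNbcd : 0 < ⟪wv b c d, wv b c d⟫ := inner_self_pos' (wv_ne_zero iDBC)
  have hNcda : 0 < ⟪wv c d a, wv c d a⟫ := inner_self_pos' (wv_ne_zero iACD)
  -- inner product evaluations
  have eAAc : ⟪a - a, wv a b c⟫ = 0 := by simp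
  have eAAd : ⟪a - a, wv a b d⟫ = 0 := by simp
  have eBAc : ⟪b - a, wv a b c⟫ = 0 := inner_edge_wv a b c
  have eBAd : ⟪b - a, wv a b d⟫ = 0 := inner_edge_wv a b d
  have eCAd : ⟪c - a, wv a b d⟫ = ⟪wv a b c, wv a b d⟫ := inner_sub_wv a b d c
  have eDAc : ⟪d - a, wv a b c⟫ = ⟪wv a b d, wv a b c⟫ := inner_sub_wv a b c d
  have eDAd : ⟪d - a, wv a b d⟫ = ⟪wv a b d, wv a b d⟫ := inner_sub_wv a b d d
  have eABa : ⟪a - b, wv b c a⟫ = ⟪wv b c a, wv b c a⟫ := inner_sub_wv b c a a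
  have eABd : ⟪a - b, wv b c d⟫ = ⟪wv b c a, wv b c d⟫ := inner_sub_wv b c d a
  have eBBa : ⟪b - b, wv b c a⟫ = 0 := by simp
  have eBBd : ⟪b - b, wv b c d⟫ = 0 := by simp
  have eCBa : ⟪c - b, wv b c a⟫ = 0 := inner_edge_wv b c a
  have eCBd : ⟪c - b, wv b c d⟫ = 0 := inner_edge_wv b c d
  have eDBa : ⟪d - b, wv b c a⟫ = ⟪wv b c d, wv b c a⟫ := inner_sub_wv b c a d
  have eDBd : ⟪d - b, wv b c d⟫ = ⟪wv b c d, wv b c d⟫ := inner_sub_wv b c d d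
  have eACa : ⟪a - c, wv c d a⟫ = ⟪wv c d a, wv c d a⟫ := inner_sub_wv c d a a
  have eACb : ⟪a - c, wv c d b⟫ = ⟪wv c d a, wv c d b⟫ := inner_sub_wv c d b a
  have eBCa : ⟪b - c, wv c d a⟫ = ⟪wv c d b, wv c d a⟫ := inner_sub_wv c d a b
  have eCCa : ⟪c - c, wv c d a⟫ = 0 := by simp
  have eCCb : ⟪c - c, wv c d b⟫ = 0 := by simp
  have eDCa : ⟪d - c, wv c d a⟫ = 0 := inner_edge_wv c d a
  have eDCb : ⟪d - c, wv c d b⟫ = 0 := inner_edge_wv c d b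
  -- base eventual fact
  have hbase : ∀ᶠ t in 𝓝[>] (0:ℝ), 0 < t ∧ t < 1/2 :=
    Filter.eventually_of_mem (Ioo_mem_nhdsGT (by norm_num : (0:ℝ) < 1/2))
      fun x hx => ⟨hx.1, hx.2⟩
  -- face set equalities
  have sABC : ({a, b, c} : Set E3) = {c, a, b} := by ext x; simp; tauto
  have sABD : ({a, b, d} : Set E3) = {d, a, b} := by ext x; simp; tauto
  have sBCD : ({b, c, d} : Set E3) = {d, b, c} := by ext x; simp; tauto
  intro k
  fin_cases k
  · -- k = 0 : sink C = abd, weights (t, 1-t-t², t²) on (a, b, d)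
    have E2 : ∀ᶠ t in 𝓝[>] (0:ℝ),
        ⟪wv b c a, wv b c d⟫ + t * ⟪wv b c d, wv b c d⟫ < 0 := by
      apply eventually_neg (by fun_prop)
      simpa using hKbc
    have E3 : ∀ᶠ t in 𝓝[>] (0:ℝ),
        t * ⟪wv c d a, wv c d a⟫ + (1 - t - t^2) * ⟪wv c d b, wv c d a⟫ < 0 := by
      apply eventually_neg (by fun_prop)
      simpa using hKcd'
    obtain ⟨t, ⟨⟨ht0, ht12⟩, hE2⟩, hE3⟩ := ((hbase.and E2).and E3).exists
    have h1mt : 0 < 1 - t - t^2 := by nlinarith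
    have hqwit : ∃ w : Fin 3 → ℝ, (∀ i, 0 < w i) ∧ (w 0 + w 1 + w 2 = 1) ∧
        ⟪(w 0 • a + w 1 • b + w 2 • d) - a, wv a b c⟫ < 0 ∧
        ⟪(w 0 • a + w 1 • b + w 2 • d) - b, wv b c d⟫ < 0 ∧
        ⟪(w 0 • a + w 1 • b + w 2 • d) - c, wv c d a⟫ < 0 := by
      refine ⟨![t, 1 - t - t^2, t^2], ?_, ?_, ?_, ?_, ?_⟩
      · intro i; fin_cases i
        · simpa using ht0
        · simpa using h1mt
        · simpa using pow_pos ht0 2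
      · simp only [Matrix.cons_val_zero, Matrix.cons_val_one, Matrix.head_cons,
          Matrix.cons_val_two, Matrix.tail_cons]
        ring
      · simp only [Matrix.cons_val_zero, Matrix.cons_val_one, Matrix.head_cons,
          Matrix.cons_val_two, Matrix.tail_cons]
        rw [inner_combo3 (by ring), eAAc, eBAc, eDAc]
        nlinarith [mul_neg_of_pos_of_neg (pow_pos ht0 2) hKab']
      · simp only [Matrix.cons_val_zero, Matrix.cons_val_one, Matrix.head_cons,
          Matrix.cons_val_two, Matrix.tail_cons]
        rw [inner_combo3 (by ring), eABd, eBBd, eDBd]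
        nlinarith [mul_neg_of_pos_of_neg ht0 hE2]
      · simp only [Matrix.cons_val_zero, Matrix.cons_val_one, Matrix.head_cons,
          Matrix.cons_val_two, Matrix.tail_cons]
        rw [inner_combo3 (by ring), eACa, eBCa, eDCa]
        linarith
    obtain ⟨p, hpint, hstab, hn1, hn2, hn3⟩ :=
      glue T 0 1 3 2 (by decide) (by decide) (by decide) (by decide) (by decide) (by decide)
        a b c (wv a b c) (wv b c d) (wv c d a) hqwit
    have tC : TipsOver p c a b := tipsOver_of_inner_neg iCAB hn1
    have tD : TipsOver p d b c := tipsOver_of_inner_neg iDBC hn2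
    have tB : TipsOver p a c d := tipsOver_of_inner_neg iACD hn3
    refine ⟨p, by rwa [hrng] at hpint, ?_⟩
    exact ⟨hstab,
      fun hs => not_stableOn_of_tipsOver iCAB tC ((stableOn_congr sABC).1 hs),
      fun hs => not_stableOn_of_tipsOver iDBC tD ((stableOn_congr sBCD).1 hs),
      not_stableOn_of_tipsOver iACD tB,
      tC, tD, tB⟩
  · -- k = 1 : sink D = abc, weights (t², 1-t-t², t) on (a, b, c)
    have E3 : ∀ᶠ t in 𝓝[>] (0:ℝ),
        t^2 * ⟪wv c d a, wv c d a⟫ + (1 - t - t^2) * ⟪wv c d b, wv c d a⟫ < 0 := by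
      apply eventually_neg (by fun_prop)
      simpa using hKcd'
    obtain ⟨t, ⟨ht0, ht12⟩, hE3⟩ := (hbase.and E3).exists
    have h1mt : 0 < 1 - t - t^2 := by nlinarith
    have hqwit : ∃ w : Fin 3 → ℝ, (∀ i, 0 < w i) ∧ (w 0 + w 1 + w 2 = 1) ∧
        ⟪(w 0 • a + w 1 • b + w 2 • c) - a, wv a b d⟫ < 0 ∧
        ⟪(w 0 • a + w 1 • b + w 2 • c) - b, wv b c d⟫ < 0 ∧
        ⟪(w 0 • a + w 1 • b + w 2 • c) - c, wv c d a⟫ < 0 := by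
      refine ⟨![t^2, 1 - t - t^2, t], ?_, ?_, ?_, ?_, ?_⟩
      · intro i; fin_cases i
        · simpa using pow_pos ht0 2
        · simpa using h1mt
        · simpa using ht0
      · simp only [Matrix.cons_val_zero, Matrix.cons_val_one, Matrix.head_cons,
          Matrix.cons_val_two, Matrix.tail_cons]
        ring
      · simp only [Matrix.cons_val_zero, Matrix.cons_val_one, Matrix.head_cons,
          Matrix.cons_val_two, Matrix.tail_cons]
        rw [inner_combo3 (by ring), eAAd, eBAd, eCAd]
        nlinarith [mul_neg_of_pos_of_neg ht0 hKab]
      · simp only [Matrix.cons_val_zero, Matrix.cons_val_one, Matrix.head_cons,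
          Matrix.cons_val_two, Matrix.tail_cons]
        rw [inner_combo3 (by ring), eABd, eBBd, eCBd]
        nlinarith [mul_neg_of_pos_of_neg (pow_pos ht0 2) hKbc]
      · simp only [Matrix.cons_val_zero, Matrix.cons_val_one, Matrix.head_cons,
          Matrix.cons_val_two, Matrix.tail_cons]
        rw [inner_combo3 (by ring), eACa, eBCa, eCCa]
        linarith
    obtain ⟨p, hpint, hstab, hn1, hn2, hn3⟩ :=
      glue T 0 1 2 3 (by decide) (by decide) (by decide) (by decide) (by decide) (by decide)
        a b c (wv a b d) (wv b c d) (wv c d a) hqwit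
    have tD1 : TipsOver p d a b := tipsOver_of_inner_neg iDAB hn1
    have tD2 : TipsOver p d b c := tipsOver_of_inner_neg iDBC hn2
    have tB : TipsOver p a c d := tipsOver_of_inner_neg iACD hn3
    refine ⟨p, by rwa [hrng] at hpint, ?_⟩
    exact ⟨hstab,
      fun hs => not_stableOn_of_tipsOver iDAB tD1 ((stableOn_congr sABD).1 hs),
      fun hs => not_stableOn_of_tipsOver iDBC tD2 ((stableOn_congr sBCD).1 hs),
      not_stableOn_of_tipsOver iACD tB,
      tD1, tD2, tB⟩
  · -- k = 2 : sink A = bcd, weights (1-t-t², t, t²) on (b, c, d)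
    have E1 : ∀ᶠ t in 𝓝[>] (0:ℝ),
        ⟪wv a b c, wv a b d⟫ + t * ⟪wv a b d, wv a b d⟫ < 0 := by
      apply eventually_neg (by fun_prop)
      simpa using hKab
    obtain ⟨t, ⟨ht0, ht12⟩, hE1⟩ := (hbase.and E1).exists
    have h1mt : 0 < 1 - t - t^2 := by nlinarith
    have hqwit : ∃ w : Fin 3 → ℝ, (∀ i, 0 < w i) ∧ (w 0 + w 1 + w 2 = 1) ∧
        ⟪(w 0 • b + w 1 • c + w 2 • d) - a, wv a b d⟫ < 0 ∧
        ⟪(w 0 • b + w 1 • c + w 2 • d) - b, wv b c a⟫ < 0 ∧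
        ⟪(w 0 • b + w 1 • c + w 2 • d) - c, wv c d a⟫ < 0 := by
      refine ⟨![1 - t - t^2, t, t^2], ?_, ?_, ?_, ?_, ?_⟩
      · intro i; fin_cases i
        · simpa using h1mt
        · simpa using ht0
        · simpa using pow_pos ht0 2
      · simp only [Matrix.cons_val_zero, Matrix.cons_val_one, Matrix.head_cons,
          Matrix.cons_val_two, Matrix.tail_cons]
        ring
      · simp only [Matrix.cons_val_zero, Matrix.cons_val_one, Matrix.head_cons,
          Matrix.cons_val_two, Matrix.tail_cons]
        rw [inner_combo3 (by ring), eBAd, eCAd, eDAd]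
        nlinarith [mul_neg_of_pos_of_neg ht0 hE1]
      · simp only [Matrix.cons_val_zero, Matrix.cons_val_one, Matrix.head_cons,
          Matrix.cons_val_two, Matrix.tail_cons]
        rw [inner_combo3 (by ring), eBBa, eCBa, eDBa]
        nlinarith [mul_neg_of_pos_of_neg (pow_pos ht0 2) hKbc']
      · simp only [Matrix.cons_val_zero, Matrix.cons_val_one, Matrix.head_cons,
          Matrix.cons_val_two, Matrix.tail_cons]
        rw [inner_combo3 (by ring), eBCa, eCCa, eDCa]
        nlinarith [mul_neg_of_pos_of_neg h1mt hKcd']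
    obtain ⟨p, hpint, hstab, hn1, hn2, hn3⟩ :=
      glue T 1 2 3 0 (by decide) (by decide) (by decide) (by decide) (by decide) (by decide)
        a b c (wv a b d) (wv b c a) (wv c d a) hqwit
    have tD1 : TipsOver p d a b := tipsOver_of_inner_neg iDAB hn1
    have tA2 : TipsOver p a b c := tipsOver_of_inner_neg iABC hn2
    have tB3 : TipsOver p a c d := tipsOver_of_inner_neg iACD hn3
    refine ⟨p, by rwa [hrng] at hpint, ?_⟩
    exact ⟨hstab,
      fun hs => not_stableOn_of_tipsOver iDAB tD1 ((stableOn_congr sABD).1 hs),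
      not_stableOn_of_tipsOver iABC tA2,
      not_stableOn_of_tipsOver iACD tB3,
      tD1, tA2, tB3⟩
  · -- k = 3 : sink B = acd, weights (t², 1-t-t², t) on (a, c, d)
    have E1 : ∀ᶠ t in 𝓝[>] (0:ℝ),
        (1 - t - t^2) * ⟪wv a b c, wv a b d⟫ + t * ⟪wv a b d, wv a b d⟫ < 0 := by
      apply eventually_neg (by fun_prop)
      simpa using hKab
    have E2 : ∀ᶠ t in 𝓝[>] (0:ℝ),
        t * ⟪wv b c a, wv b c a⟫ + ⟪wv b c d, wv b c a⟫ < 0 := by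
      apply eventually_neg (by fun_prop)
      simpa using hKbc'
    obtain ⟨t, ⟨⟨ht0, ht12⟩, hE1⟩, hE2⟩ := ((hbase.and E1).and E2).exists
    have h1mt : 0 < 1 - t - t^2 := by nlinarith
    have hqwit : ∃ w : Fin 3 → ℝ, (∀ i, 0 < w i) ∧ (w 0 + w 1 + w 2 = 1) ∧
        ⟪(w 0 • a + w 1 • c + w 2 • d) - a, wv a b d⟫ < 0 ∧
        ⟪(w 0 • a + w 1 • c + w 2 • d) - b, wv b c a⟫ < 0 ∧
        ⟪(w 0 • a + w 1 • c + w 2 • d) - c, wv c d b⟫ < 0 := by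
      refine ⟨![t^2, 1 - t - t^2, t], ?_, ?_, ?_, ?_, ?_⟩
      · intro i; fin_cases i
        · simpa using pow_pos ht0 2
        · simpa using h1mt
        · simpa using ht0
      · simp only [Matrix.cons_val_zero, Matrix.cons_val_one, Matrix.head_cons,
          Matrix.cons_val_two, Matrix.tail_cons]
        ring
      · simp only [Matrix.cons_val_zero, Matrix.cons_val_one, Matrix.head_cons,
          Matrix.cons_val_two, Matrix.tail_cons]
        rw [inner_combo3 (by ring), eAAd, eCAd, eDAd]
        linarith
      · simp only [Matrix.cons_val_zero, Matrix.cons_val_one, Matrix.head_cons,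
          Matrix.cons_val_two, Matrix.tail_cons]
        rw [inner_combo3 (by ring), eABa, eCBa, eDBa]
        nlinarith [mul_neg_of_pos_of_neg ht0 hE2]
      · simp only [Matrix.cons_val_zero, Matrix.cons_val_one, Matrix.head_cons,
          Matrix.cons_val_two, Matrix.tail_cons]
        rw [inner_combo3 (by ring), eACb, eCCb, eDCb]
        nlinarith [mul_neg_of_pos_of_neg (pow_pos ht0 2) hKcd]
    obtain ⟨p, hpint, hstab, hn1, hn2, hn3⟩ :=
      glue T 0 2 3 1 (by decide) (by decide) (by decide) (by decide) (by decide) (by decide)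
        a b c (wv a b d) (wv b c a) (wv c d b) hqwit
    have tD1 : TipsOver p d a b := tipsOver_of_inner_neg iDAB hn1
    have tA2 : TipsOver p a b c := tipsOver_of_inner_neg iABC hn2
    have tA3 : TipsOver p b c d := tipsOver_of_inner_neg iBCD hn3
    refine ⟨p, by rwa [hrng] at hpint, ?_⟩
    exact ⟨hstab,
      fun hs => not_stableOn_of_tipsOver iDAB tD1 ((stableOn_congr sABD).1 hs),
      not_stableOn_of_tipsOver iABC tA2,
      not_stableOn_of_tipsOver iBCD tA3,
      tD1, tA2, tA3⟩
end
end

section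
/- For any tetrahedron and any point p in its interior, there is at least one face F such that the orthogonal projection of p onto the affine span of F lies in F; in particular every loaded tetrahedron has at least one gravitationally stable resting face. -/
open RealInnerProductSpace

noncomputable section

/-- Weak stability: the orthogonal projection of the load point `p` onto the
affine span of the face with vertices `v₁, v₂, v₃` lies in the face itself. -/
def RestsOn (p v₁ v₂ v₃ : E3) : Prop :=
  ∃ q ∈ convexHull ℝ ({v₁, v₂, v₃} : Set E3),
    ∀ w ∈ (affineSpan ℝ ({v₁, v₂, v₃} : Set E3)).direction, ⟪p - q, w⟫ = 0

/-- Weak stability on the `i`-th face of the tetrahedron `ABCD`. -/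
def FaceRests (A B C D p : E3) : Fin 4 → Prop
  | 0 => RestsOn p B C D
  | 1 => RestsOn p A C D
  | 2 => RestsOn p A B D
  | 3 => RestsOn p A B C

open Set Metric

theorem key_lemma (b : AffineBasis (Fin 4) ℝ E3) (p : E3)
    (hp : p ∈ interior (convexHull ℝ (Set.range b))) :
    ∃ i : Fin 4, ∃ q ∈ convexHull ℝ (b '' ({i}ᶜ : Set (Fin 4))),
      ∀ w ∈ (affineSpan ℝ (b '' ({i}ᶜ : Set (Fin 4)))).direction, ⟪p - q, w⟫ = 0 := by
  classical
  set K : Set E3 := convexHull ℝ (Set.range b) with hK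
  have hKcpt : IsCompact K := (Set.finite_range b).isCompact_convexHull ℝ
  have hKcl : IsClosed K := hKcpt.isClosed
  have hKne : Kᶜ.Nonempty := Set.nonempty_compl.mpr hKcpt.ne_univ
  set d : ℝ := infDist p Kᶜ with hd
  have hdpos : 0 < d := by
    have hpnc : p ∉ closure Kᶜ := by rw [closure_compl]; simpa using hp
    rw [hd, ← infDist_closure]
    exact (isClosed_closure.notMem_iff_infDist_pos hKne.closure).mp hpnc
  obtain ⟨q, hqcl, hqd⟩ : ∃ q ∈ closure Kᶜ, infDist p (closure Kᶜ) = dist p q :=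
    isClosed_closure.exists_infDist_eq_dist hKne.closure p
  rw [infDist_closure] at hqd
  have hpq : dist p q = d := hqd.symm
  have hball : Metric.ball p d ⊆ K := by
    intro x hx
    by_contra hxK
    have h1 : d ≤ dist p x := infDist_le_dist_of_mem (show x ∈ Kᶜ from hxK)
    rw [Metric.mem_ball, dist_comm] at hx
    linarith
  have hqK : q ∈ K := by
    by_contra hqK
    have hqopen : Kᶜ ∈ nhds q := hKcl.isOpen_compl.mem_nhds hqK
    obtain ⟨ε, hε, hballq⟩ := Metric.mem_nhds_iff.mp hqopen
    set s : ℝ := min (ε / 2) d with hs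
    have hs0 : 0 < s := lt_min (by linarith) hdpos
    have hsd : s ≤ d := min_le_right _ _
    set q' : E3 := q + (s / d) • (p - q) with hq'
    have hq'q : dist q' q = s := by
      rw [dist_eq_norm]
      have h2 : q' - q = (s / d) • (p - q) := by rw [hq']; abel
      rw [h2, norm_smul, Real.norm_eq_abs, ← dist_eq_norm p q, hpq,
        abs_of_pos (by positivity)]
      field_simp
    have hq'mem : q' ∈ Kᶜ := hballq (by
      rw [Metric.mem_ball, hq'q]
      calc s ≤ ε / 2 := min_le_left _ _
        _ < ε := by linarith)
    have hpq' : dist p q' = d - s := by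
      rw [dist_eq_norm]
      have h2 : p - q' = (1 - s / d) • (p - q) := by
        rw [hq', sub_smul, one_smul]; abel
      rw [h2, norm_smul, Real.norm_eq_abs, ← dist_eq_norm p q, hpq,
        abs_of_nonneg (by rw [sub_nonneg]; exact div_le_one_of_le₀ hsd hdpos.le)]
      field_simp
    have h3 : d ≤ dist p q' := infDist_le_dist_of_mem hq'mem
    rw [hpq'] at h3; linarith
  have hcoord_nonneg : ∀ j, 0 ≤ b.coord j q := by
    have h4 : q ∈ {x : E3 | ∀ j, 0 ≤ b.coord j x} := by
      rw [← b.convexHull_eq_nonneg_coord]; exact hqK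
    exact h4
  have hq_notint : q ∉ interior K := by
    rw [closure_compl] at hqcl; exact hqcl
  obtain ⟨i, hi⟩ : ∃ i, b.coord i q = 0 := by
    by_contra hc
    push_neg at hc
    refine hq_notint ?_
    have h5 : q ∈ {x : E3 | ∀ j, 0 < b.coord j x} :=
      fun j => lt_of_le_of_ne (hcoord_nonneg j) (Ne.symm (hc j))
    rw [← b.interior_convexHull] at h5
    exact h5
  -- q lies in the face opposite vertex i
  have hqface : q ∈ convexHull ℝ (b '' ({i}ᶜ : Set (Fin 4))) := by
    have hw1 : ∑ j, b.coord j q = 1 := b.sum_coord_apply_eq_one q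
    have hsum_erase : ∑ j ∈ Finset.univ.erase i, b.coord j q = 1 := by
      rw [← Finset.add_sum_erase _ _ (Finset.mem_univ i)] at hw1
      rw [hi, zero_add] at hw1; exact hw1
    have hcomb : (Finset.univ.erase i).affineCombination ℝ b (fun j => b.coord j q) = q := by
      have hind := Finset.affineCombination_indicator_subset (fun j => b.coord j q) (⇑b)
        (Finset.subset_univ (Finset.univ.erase i))
      have heq : Set.indicator ↑(Finset.univ.erase i) (fun j => b.coord j q)
          = fun j => b.coord j q := by
        funext j
        rcases eq_or_ne j i with rfl | hj
        · simp [Set.indicator_apply, hi]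
        · simp [Set.indicator_apply, hj]
      rw [heq] at hind
      rw [hind, b.affineCombination_coord_eq_self]
    rw [← hcomb, affineCombination_eq_centerMass hsum_erase]
    refine Finset.centerMass_mem_convexHull _ (fun j _ => hcoord_nonneg j)
      (by rw [hsum_erase]; norm_num) (fun j hj => ?_)
    exact ⟨j, by simpa using (Finset.mem_erase.mp hj).1, rfl⟩
  refine ⟨i, q, hqface, ?_⟩
  -- every point of the face plane has i-th coordinate zero
  have hplane : ∀ x ∈ affineSpan ℝ (b '' ({i}ᶜ : Set (Fin 4))), b.coord i x = 0 := by
    intro x hx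
    have himg : (⇑b '' ({i}ᶜ : Set (Fin 4))) = Set.range (fun j : ({i}ᶜ : Set (Fin 4)) => b j) :=
      Set.image_eq_range _ _
    rw [himg] at hx
    obtain ⟨w, hw, rfl⟩ := eq_affineCombination_of_mem_affineSpan_of_fintype hx
    rw [Finset.map_affineCombination _ _ _ hw (b.coord i),
      Finset.affineCombination_eq_linear_combination _ _ _ hw]
    refine Finset.sum_eq_zero (fun j _ => ?_)
    have hji : b.coord i (b j.val) = 0 := by
      rw [b.coord_apply]
      have hne : i ≠ j.val := fun hc => j.prop (by simp [← hc])
      simp [hne]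
    simp [Function.comp, hji]
  -- the plane is at distance ≥ d from p
  have hdist : ∀ x : E3, b.coord i x = 0 → d ≤ dist p x := by
    intro x hx
    by_contra hlt
    push_neg at hlt
    set ε : ℝ := d - dist p x with hε
    have hε0 : 0 < ε := by linarith
    have hxbi : x ≠ b i := by
      intro hcon; rw [hcon] at hx; simp [b.coord_apply] at hx
    set c : ℝ := dist x (b i) with hc
    have hc0 : 0 < c := dist_pos.mpr hxbi
    set t : ℝ := ε / (2 * c) with ht
    have ht0 : 0 < t := by positivity
    set x' : E3 := x + t • (x - b i) with hx'
    have hxx' : dist x x' = t * c := by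
      rw [dist_eq_norm]
      have h2 : x - x' = (-t) • (x - b i) := by rw [hx', neg_smul]; abel
      rw [h2, norm_smul, Real.norm_eq_abs, abs_neg, abs_of_pos ht0, ← dist_eq_norm x (b i)]
    have hx'ball : x' ∈ Metric.ball p d := by
      rw [Metric.mem_ball, dist_comm]
      calc dist p x' ≤ dist p x + dist x x' := dist_triangle _ _ _
        _ = dist p x + t * c := by rw [hxx']
        _ = dist p x + ε / 2 := by rw [ht]; field_simp
        _ < d := by rw [hε]; linarith
    have hx'K : x' ∈ K := hball hx'ball
    have hnn : 0 ≤ b.coord i x' := by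
      have h4 : x' ∈ {y : E3 | ∀ j, 0 ≤ b.coord j y} := by
        rw [← b.convexHull_eq_nonneg_coord]; exact hx'K
      exact h4 i
    have hcoordx' : b.coord i x' = -t := by
      have hlin : x' = AffineMap.lineMap (b i) x (1 + t) := by
        rw [hx', AffineMap.lineMap_apply]
        simp only [vsub_eq_sub, vadd_eq_add]
        module
      rw [hlin, AffineMap.apply_lineMap, b.coord_apply, hx]
      simp [AffineMap.lineMap_apply]
    rw [hcoordx'] at hnn; linarith
  intro w hw
  by_cases hw0 : w = 0
  · simp [hw0]
  have hqspan : q ∈ affineSpan ℝ (b '' ({i}ᶜ : Set (Fin 4))) :=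
    convexHull_subset_affineSpan _ hqface
  have hkey : ∀ t : ℝ, d ^ 2 ≤ d ^ 2 - 2 * t * ⟪p - q, w⟫ + t ^ 2 * ‖w‖ ^ 2 := by
    intro t
    have htw : t • w ∈ (affineSpan ℝ (b '' ({i}ᶜ : Set (Fin 4)))).direction :=
      Submodule.smul_mem _ t hw
    have hmem : t • w +ᵥ q ∈ affineSpan ℝ (b '' ({i}ᶜ : Set (Fin 4))) :=
      AffineSubspace.vadd_mem_of_mem_direction htw hqspan
    have h1 : d ≤ dist p (t • w +ᵥ q) := hdist _ (hplane _ hmem)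
    have h2 : dist p (t • w +ᵥ q) ^ 2 = d ^ 2 - 2 * t * ⟪p - q, w⟫ + t ^ 2 * ‖w‖ ^ 2 := by
      rw [dist_eq_norm]
      have h3 : p - (t • w +ᵥ q) = (p - q) - t • w := by
        simp only [vadd_eq_add]; abel
      rw [h3, norm_sub_sq_real, real_inner_smul_right, norm_smul]
      have h4 : ‖p - q‖ = d := by rw [← dist_eq_norm, hpq]
      rw [h4]
      rw [mul_pow, Real.norm_eq_abs, sq_abs]
      ring
    nlinarith [dist_nonneg (x := p) (y := t • w +ᵥ q)]
  have hw2 : (0:ℝ) < ‖w‖ ^ 2 := by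
    have := norm_pos_iff.mpr hw0; positivity
  have hNne : ‖w‖ ^ 2 ≠ 0 := hw2.ne'
  set c : ℝ := ⟪p - q, w⟫ with hcdef
  have h := hkey (c / ‖w‖ ^ 2)
  have heq2 : d ^ 2 - 2 * (c / ‖w‖ ^ 2) * c + (c / ‖w‖ ^ 2) ^ 2 * ‖w‖ ^ 2
      = d ^ 2 - c ^ 2 / ‖w‖ ^ 2 := by field_simp; ring
  rw [heq2] at h
  have h6 : c ^ 2 / ‖w‖ ^ 2 = 0 := le_antisymm (by linarith) (by positivity)
  have h7 : c = 0 := by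
    field_simp at h6; simpa using h6
  exact h7


/-- **Every loaded tetrahedron has a weakly stable face**: for any tetrahedron
`ABCD` and any load point `p` in its interior there is at least one face `F`
such that the orthogonal projection of `p` onto the affine span of `F` lies
in `F`. -/
theorem exists_resting_face (A B C D : E3)
    (h : AffineIndependent ℝ ![A, B, C, D])
    (p : E3) (hp : p ∈ interior (convexHull ℝ ({A, B, C, D} : Set E3))) :
    ∃ i : Fin 4, FaceRests A B C D p i := by
  have hspan : affineSpan ℝ (Set.range ![A, B, C, D]) = ⊤ := by
    rw [h.affineSpan_eq_top_iff_card_eq_finrank_add_one]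
    simp [finrank_euclideanSpace_fin]
  let b : AffineBasis (Fin 4) ℝ E3 := ⟨![A, B, C, D], h, hspan⟩
  have hbcoe : ⇑b = ![A, B, C, D] := rfl
  have hrange : Set.range ⇑b = ({A, B, C, D} : Set E3) := by
    rw [hbcoe]
    ext x
    simp [Fin.exists_fin_two, Fin.exists_fin_succ, Matrix.cons_val_zero, Matrix.cons_val_succ]
    tauto
  obtain ⟨i, q, hq1, hq2⟩ := key_lemma b p (by rw [hrange]; exact hp)
  refine ⟨i, ?_⟩
  fin_cases i
  · have hset : (⇑b '' ({(0 : Fin 4)}ᶜ : Set (Fin 4))) = ({B, C, D} : Set E3) := by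
      have h1 : ({(0 : Fin 4)}ᶜ : Set (Fin 4)) = {1, 2, 3} := by
        ext j; fin_cases j <;> simp
      rw [h1, hbcoe, Set.image_insert_eq, Set.image_insert_eq, Set.image_singleton]
      norm_num
      rfl
    have hq1' : q ∈ convexHull ℝ (⇑b '' ({(0 : Fin 4)}ᶜ : Set (Fin 4))) := hq1
    have hq2' : ∀ w ∈ (affineSpan ℝ (⇑b '' ({(0 : Fin 4)}ᶜ : Set (Fin 4)))).direction,
        ⟪p - q, w⟫ = 0 := hq2
    rw [hset] at hq1' hq2'
    exact ⟨q, hq1', hq2'⟩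
  · have hset : (⇑b '' ({(1 : Fin 4)}ᶜ : Set (Fin 4))) = ({A, C, D} : Set E3) := by
      have h1 : ({(1 : Fin 4)}ᶜ : Set (Fin 4)) = {0, 2, 3} := by
        ext j; fin_cases j <;> simp
      rw [h1, hbcoe, Set.image_insert_eq, Set.image_insert_eq, Set.image_singleton]
      norm_num
      rfl
    have hq1' : q ∈ convexHull ℝ (⇑b '' ({(1 : Fin 4)}ᶜ : Set (Fin 4))) := hq1
    have hq2' : ∀ w ∈ (affineSpan ℝ (⇑b '' ({(1 : Fin 4)}ᶜ : Set (Fin 4)))).direction,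
        ⟪p - q, w⟫ = 0 := hq2
    rw [hset] at hq1' hq2'
    exact ⟨q, hq1', hq2'⟩
  · have hset : (⇑b '' ({(2 : Fin 4)}ᶜ : Set (Fin 4))) = ({A, B, D} : Set E3) := by
      have h1 : ({(2 : Fin 4)}ᶜ : Set (Fin 4)) = {0, 1, 3} := by
        ext j; fin_cases j <;> simp
      rw [h1, hbcoe, Set.image_insert_eq, Set.image_insert_eq, Set.image_singleton]
      norm_num
      rfl
    have hq1' : q ∈ convexHull ℝ (⇑b '' ({(2 : Fin 4)}ᶜ : Set (Fin 4))) := hq1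
    have hq2' : ∀ w ∈ (affineSpan ℝ (⇑b '' ({(2 : Fin 4)}ᶜ : Set (Fin 4)))).direction,
        ⟪p - q, w⟫ = 0 := hq2
    rw [hset] at hq1' hq2'
    exact ⟨q, hq1', hq2'⟩
  · have hset : (⇑b '' ({(3 : Fin 4)}ᶜ : Set (Fin 4))) = ({A, B, C} : Set E3) := by
      have h1 : ({(3 : Fin 4)}ᶜ : Set (Fin 4)) = {0, 1, 2} := by
        ext j; fin_cases j <;> simp
      rw [h1, hbcoe, Set.image_insert_eq, Set.image_insert_eq, Set.image_singleton]
      norm_num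
      rfl
    have hq1' : q ∈ convexHull ℝ (⇑b '' ({(3 : Fin 4)}ᶜ : Set (Fin 4))) := hq1
    have hq2' : ∀ w ∈ (affineSpan ℝ (⇑b '' ({(3 : Fin 4)}ᶜ : Set (Fin 4)))).direction,
        ⟪p - q, w⟫ = 0 := hq2
    rw [hset] at hq1' hq2'
    exact ⟨q, hq1', hq2'⟩
end
end
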